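/- arXiv:2109.10067 — 14 statements merged into one kernel-verified Lean document; each statement's English description precedes it below -/
import Mathlib

section
/- For a set C ⊆ ℝ², the following are equivalent: (1) C = C_γ^φ for some γ ∈ [π/2, π] and some φ ∈ [0, γ − π/2] \ {γ − π, π/2}; (2) C is a closed convex cone satisfying ℝ²_≥ ⊆ C and (−ℝ²_≥) ∩ C = {0}, where ℝ²_≥ denotes the nonnegative orthant. -/
open Real Set Pointwise

noncomputable section

/-- The linear map `T_γ^φ : ℝ² → ℝ²` from the paper, with `φ' = γ - π/2 - φ`. -/
def Tmap (γ φ : ℝ) (y : ℝ × ℝ) : ℝ × ℝ :=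
  (Real.cos (γ - Real.pi/2 - φ) * y.1 + Real.sin (γ - Real.pi/2 - φ) * y.2,
   Real.sin φ * y.1 + Real.cos φ * y.2)

/-- The ordering cone `C_γ^φ = {y : T_γ^φ(y) ≥ 0 componentwise}`. -/
def coneC (γ φ : ℝ) : Set (ℝ × ℝ) :=
  {y : ℝ × ℝ | 0 ≤ (Tmap γ φ y).1 ∧ 0 ≤ (Tmap γ φ y).2}

/-- The relation `y ≤_γ^φ y' ⇔ y' - y ∈ C_γ^φ`. -/
def leC (γ φ : ℝ) (y y' : ℝ × ℝ) : Prop :=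
  y' - y ∈ coneC γ φ

/-- The set of admissible rotation angles `φ ∈ [0, γ - π/2] \ {γ - π, π/2}`. -/
def PhiDomain (γ : ℝ) : Set ℝ :=
  Set.Icc 0 (γ - Real.pi/2) \ {γ - Real.pi, Real.pi/2}

/-- `x` is optimal with respect to `≤_γ^φ` (minimization). -/
def OptimalWrt (γ φ : ℝ) {X : Type} (f : X → ℝ × ℝ) (x : X) : Prop :=
  ¬ ∃ x', f x' ≠ f x ∧ leC γ φ (f x') (f x)

/-- `x` is `γ`-supported (minimization). -/
def GammaSupported (γ : ℝ) {X : Type} (f : X → ℝ × ℝ) (x : X) : Prop :=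
  ∃ φ ∈ PhiDomain γ, OptimalWrt γ φ f x

/-- `x` is efficient (minimization, componentwise order). -/
def Efficient {X : Type} (f : X → ℝ × ℝ) (x : X) : Prop :=
  ¬ ∃ x', f x' ≠ f x ∧ (f x').1 ≤ (f x).1 ∧ (f x').2 ≤ (f x).2

/-- `S` is an `α`-approximation with respect to the componentwise order (minimization). -/
def IsApprox (α : ℝ) {X : Type} (f : X → ℝ × ℝ) (S : Set X) : Prop :=
  ∀ x : X, ∃ x' ∈ S, (f x').1 ≤ α * (f x).1 ∧ (f x').2 ≤ α * (f x).2

/-- `x` is `α`-approximate for the weighted max-ordering scalarization of `I_γ^φ`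
with weights `w₁, w₂`. -/
def MaxOrdApprox (α w₁ w₂ γ φ : ℝ) {X : Type} (f : X → ℝ × ℝ) (x : X) : Prop :=
  ∀ x'' : X, max (w₁ * (Tmap γ φ (f x)).1) (w₂ * (Tmap γ φ (f x)).2) ≤
    α * max (w₁ * (Tmap γ φ (f x'')).1) (w₂ * (Tmap γ φ (f x'')).2)

/-- The weight `w₁ = √(sin φ)/√(cos φ') + √(cos φ)/√(sin φ')`. -/
def wOne (γ φ : ℝ) : ℝ :=
  Real.sqrt (Real.sin φ) / Real.sqrt (Real.cos (γ - Real.pi/2 - φ)) +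
  Real.sqrt (Real.cos φ) / Real.sqrt (Real.sin (γ - Real.pi/2 - φ))

/-- The weight `w₂ = √(sin φ')/√(cos φ) + √(cos φ')/√(sin φ)`. -/
def wTwo (γ φ : ℝ) : ℝ :=
  Real.sqrt (Real.sin (γ - Real.pi/2 - φ)) / Real.sqrt (Real.cos φ) +
  Real.sqrt (Real.cos (γ - Real.pi/2 - φ)) / Real.sqrt (Real.sin φ)

/-- `x` is optimal with respect to `≤_γ^φ` (maximization). -/
def OptimalWrtMax (γ φ : ℝ) {X : Type} (f : X → ℝ × ℝ) (x : X) : Prop :=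
  ¬ ∃ x', f x' ≠ f x ∧ leC γ φ (f x) (f x')

/-- `x` is `γ`-supported (maximization). -/
def GammaSupportedMax (γ : ℝ) {X : Type} (f : X → ℝ × ℝ) (x : X) : Prop :=
  ∃ φ ∈ PhiDomain γ, OptimalWrtMax γ φ f x

/-- `S` is an `α`-approximation with respect to the componentwise order (maximization). -/
def IsApproxMax (α : ℝ) {X : Type} (f : X → ℝ × ℝ) (S : Set X) : Prop :=
  ∀ x : X, ∃ x' ∈ S, (f x).1 ≤ α * (f x').1 ∧ (f x).2 ≤ α * (f x').2

lemma add_mem_of_convex_cone {C : Set (ℝ × ℝ)} (hconv : Convex ℝ C)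
    (hcone : ∀ c : ℝ, 0 ≤ c → ∀ y ∈ C, c • y ∈ C) {x y : ℝ × ℝ}
    (hx : x ∈ C) (hy : y ∈ C) : x + y ∈ C := by
  have h := hconv hx hy (by norm_num : (0:ℝ) ≤ 1/2) (by norm_num : (0:ℝ) ≤ 1/2) (by norm_num)
  have h2 := hcone 2 (by norm_num) _ h
  have : (2:ℝ) • ((1/2:ℝ) • x + (1/2:ℝ) • y) = x + y := by
    module
  rwa [this] at h2

lemma exists_slope_bound (C : Set (ℝ × ℝ)) (hclosed : IsClosed C)
    (hcone : ∀ c : ℝ, 0 ≤ c → ∀ y ∈ C, c • y ∈ C)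
    (hnegpt : ∀ y ∈ C, y.1 ≤ 0 → y.2 ≤ 0 → y = 0)
    (he1 : ((1:ℝ), (0:ℝ)) ∈ C) :
    ∃ s : ℝ, 0 ≤ s ∧ ((1:ℝ), -s) ∈ C ∧ ∀ y ∈ C, 0 < y.1 → -y.2 ≤ s * y.1 := by
  set A : Set ℝ := {s : ℝ | 0 ≤ s ∧ ((1:ℝ), -s) ∈ C} with hA
  have hA0 : (0:ℝ) ∈ A := ⟨le_refl 0, by simpa using he1⟩
  have hAclosed : IsClosed A := by
    have : A = {s : ℝ | 0 ≤ s} ∩ (fun s : ℝ => ((1:ℝ), -s)) ⁻¹' C := rfl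
    rw [this]
    exact (isClosed_le continuous_const continuous_id).inter
      (hclosed.preimage (by fun_prop))
  have hpt : ((0:ℝ), (-1:ℝ)) ∉ C := by
    intro h
    have := hnegpt _ h (le_refl 0) (by norm_num)
    simp [Prod.ext_iff] at this
  obtain ⟨ε, hε, hball⟩ := Metric.isOpen_iff.1 hclosed.isOpen_compl _ hpt
  have hAbdd : BddAbove A := by
    refine ⟨max 1 (2/ε), fun s hs => ?_⟩
    by_contra h
    push_neg at h
    have hs1 : (1:ℝ) < s := lt_of_le_of_lt (le_max_left _ _) h
    have hs2 : 2/ε < s := lt_of_le_of_lt (le_max_right _ _) h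
    have hspos : (0:ℝ) < s := by linarith
    have hsC : ((1/s : ℝ), (-1:ℝ)) ∈ C := by
      have := hcone (1/s) (by positivity) _ hs.2
      have heq : (1/s : ℝ) • ((1:ℝ), -s) = ((1/s : ℝ), (-1:ℝ)) := by
        simp [Prod.smul_def, smul_eq_mul]
        field_simp
      rwa [heq] at this
    have hlt : 1/s < ε := by
      rw [div_lt_iff₀ hspos]
      have h2 := (div_lt_iff₀ hε).mp hs2
      nlinarith
    apply hball _ hsC
    simp only [Metric.mem_ball, Prod.dist_eq, Real.dist_eq]
    rw [max_lt_iff]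
    constructor
    · rw [sub_zero, abs_of_pos (by positivity)]; exact hlt
    · simpa using hε
  have hmem : sSup A ∈ A := hAclosed.csSup_mem ⟨0, hA0⟩ hAbdd
  refine ⟨sSup A, hmem.1, hmem.2, ?_⟩
  intro y hy hy1
  by_contra h
  push_neg at h
  have hs0 : 0 ≤ sSup A := hmem.1
  have hstar : sSup A < -y.2 / y.1 := by
    rw [lt_div_iff₀ hy1]; linarith
  have hmemA : -y.2 / y.1 ∈ A := by
    constructor
    · exact le_trans hs0 hstar.le
    · have := hcone (1/y.1) (by positivity) _ hy
      have heq : (1/y.1 : ℝ) • y = ((1:ℝ), -(-y.2 / y.1)) := by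
        simp [Prod.smul_def, smul_eq_mul, Prod.ext_iff]
        constructor <;> field_simp
      rwa [heq] at this
  exact absurd (le_csSup hAbdd hmemA) (not_le.mpr hstar)

set_option maxHeartbeats 1000000 in
/-- `C = C_γ^φ` for some admissible `γ, φ` iff `C` is a closed convex cone
containing the nonnegative orthant and meeting the nonpositive orthant only in `0`. -/
theorem stmt_1 (C : Set (ℝ × ℝ)) :
    (∃ γ ∈ Set.Icc (Real.pi/2) Real.pi, ∃ φ ∈ PhiDomain γ, C = coneC γ φ) ↔
      (IsClosed C ∧ Convex ℝ C ∧ (∀ c : ℝ, 0 ≤ c → ∀ y ∈ C, c • y ∈ C) ∧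
        {y : ℝ × ℝ | 0 ≤ y.1 ∧ 0 ≤ y.2} ⊆ C ∧
        {y : ℝ × ℝ | y.1 ≤ 0 ∧ y.2 ≤ 0} ∩ C = {0}) := by

  constructor
  · rintro ⟨γ, ⟨hγ1, hγ2⟩, φ, ⟨⟨hφ0, hφγ⟩, hφne⟩, rfl⟩
    simp only [Set.mem_insert_iff, Set.mem_singleton_iff, not_or] at hφne
    obtain ⟨hφne1, hφne2⟩ := hφne
    have hpi := Real.pi_pos
    have hφlt : φ < π/2 := lt_of_le_of_ne (le_trans hφγ (by linarith)) hφne2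
    have hψ0 : 0 ≤ γ - π/2 - φ := by linarith
    have hψlt : γ - π/2 - φ < π/2 :=
      lt_of_le_of_ne (by linarith) (fun h => hφne1 (by linarith))
    have hsφ : 0 ≤ Real.sin φ := Real.sin_nonneg_of_nonneg_of_le_pi hφ0 (by linarith)
    have hcφ : 0 < Real.cos φ := Real.cos_pos_of_mem_Ioo ⟨by linarith, hφlt⟩
    have hsψ : 0 ≤ Real.sin (γ - π/2 - φ) := Real.sin_nonneg_of_nonneg_of_le_pi hψ0 (by linarith)
    have hcψ : 0 < Real.cos (γ - π/2 - φ) := Real.cos_pos_of_mem_Ioo ⟨by linarith, hψlt⟩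
    refine ⟨?_, ?_, ?_, ?_, ?_⟩
    · have heq : coneC γ φ = {y : ℝ × ℝ | 0 ≤ Real.cos (γ - π/2 - φ) * y.1 + Real.sin (γ - π/2 - φ) * y.2} ∩
          {y : ℝ × ℝ | 0 ≤ Real.sin φ * y.1 + Real.cos φ * y.2} := rfl
      rw [heq]
      exact (isClosed_le continuous_const (by fun_prop)).inter
        (isClosed_le continuous_const (by fun_prop))
    · intro x hx y hy a b ha hb hab
      simp only [coneC, Tmap, Set.mem_setOf_eq, Prod.fst_add, Prod.snd_add, Prod.smul_fst,
        Prod.smul_snd, smul_eq_mul] at *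
      constructor
      · nlinarith [mul_nonneg ha hx.1, mul_nonneg hb hy.1]
      · nlinarith [mul_nonneg ha hx.2, mul_nonneg hb hy.2]
    · intro c hc y hy
      simp only [coneC, Tmap, Set.mem_setOf_eq, Prod.smul_fst, Prod.smul_snd, smul_eq_mul] at *
      constructor
      · nlinarith [mul_nonneg hc hy.1]
      · nlinarith [mul_nonneg hc hy.2]
    · intro y hy
      simp only [Set.mem_setOf_eq] at hy
      exact ⟨add_nonneg (mul_nonneg hcψ.le hy.1) (mul_nonneg hsψ hy.2),
        add_nonneg (mul_nonneg hsφ hy.1) (mul_nonneg hcφ.le hy.2)⟩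
    · ext y
      simp only [coneC, Tmap, Set.mem_inter_iff, Set.mem_setOf_eq, Set.mem_singleton_iff]
      constructor
      · rintro ⟨⟨h1, h2⟩, h3, h4⟩
        have hy2 : y.2 = 0 := by nlinarith [mul_nonneg hsφ (neg_nonneg.mpr h1)]
        have hy1 : y.1 = 0 := by nlinarith
        exact Prod.ext hy1 hy2
      · rintro rfl
        norm_num
  · rintro ⟨hclosed, hconv, hcone, horth, hneg⟩
    have hadd : ∀ x ∈ C, ∀ y ∈ C, x + y ∈ C := fun x hx y hy =>
      add_mem_of_convex_cone hconv hcone hx hy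
    have hnegpt : ∀ y ∈ C, y.1 ≤ 0 → y.2 ≤ 0 → y = 0 := by
      intro y hy h1 h2
      have : y ∈ ({(0 : ℝ × ℝ)} : Set (ℝ × ℝ)) := hneg ▸ ⟨⟨h1, h2⟩, hy⟩
      simpa using this
    have he1 : ((1:ℝ), (0:ℝ)) ∈ C := horth (by norm_num)
    have he2 : ((0:ℝ), (1:ℝ)) ∈ C := horth (by norm_num)
    obtain ⟨s, hs0, hsC, hsB⟩ := exists_slope_bound C hclosed hcone hnegpt he1
    obtain ⟨t, ht0, htC', htB'⟩ := exists_slope_bound (Prod.swap ⁻¹' C)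
      (hclosed.preimage continuous_swap)
      (fun c hc y hy => hcone c hc y.swap hy)
      (fun y hy h1 h2 => by
        have h := hnegpt _ hy h2 h1
        rw [Prod.ext_iff] at h ⊢
        exact ⟨h.2, h.1⟩)
      he2
    have htC : ((-t : ℝ), (1:ℝ)) ∈ C := htC'
    have htB : ∀ y ∈ C, 0 < y.2 → -y.1 ≤ t * y.2 := fun y hy hy2 =>
      htB' y.swap (by simpa using hy) hy2
    have hst : s * t ≤ 1 := by
      by_contra h
      push_neg at h
      have hw : ((0:ℝ), 1 - s*t) ∈ C := by
        have h2 := hadd _ (hcone t ht0 _ hsC) _ htC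
        have heq2 : t • ((1:ℝ), -s) + ((-t:ℝ), (1:ℝ)) = ((0:ℝ), 1 - s*t) := by
          rw [Prod.ext_iff]
          simp [Prod.smul_def, smul_eq_mul]
          ring
        rwa [heq2] at h2
      have := hnegpt _ hw (le_refl 0) (by simp; linarith)
      rw [Prod.ext_iff] at this
      simp at this
      linarith
    have has : 0 ≤ arctan s := by
      have := Real.arctan_strictMono.monotone hs0
      rwa [Real.arctan_zero] at this
    have hat : 0 ≤ arctan t := by
      have := Real.arctan_strictMono.monotone ht0
      rwa [Real.arctan_zero] at this
    have haslt : arctan s < π/2 := Real.arctan_lt_pi_div_two s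
    have hatlt : arctan t < π/2 := Real.arctan_lt_pi_div_two t
    have hsum : arctan s + arctan t ≤ π/2 := by
      rcases lt_or_eq_of_le hst with h | h
      · exact (Real.arctan_add_arctan_lt_pi_div_two h).le
      · have htpos : 0 < t := by
          rcases lt_or_eq_of_le ht0 with h' | h'
          · exact h'
          · exfalso; rw [← h'] at h; simp at h
        have hseq : s = t⁻¹ := by
          field_simp
          linarith
        rw [hseq, Real.arctan_inv_of_pos htpos]
        linarith
    refine ⟨π/2 + arctan s + arctan t, ⟨by linarith, by linarith [Real.pi_pos]⟩,
      arctan s, ⟨⟨has, by linarith⟩, ?_⟩, ?_⟩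
    · simp only [Set.mem_insert_iff, Set.mem_singleton_iff, not_or]
      constructor
      · intro hcontra; linarith
      · intro hcontra; linarith
    · ext y
      simp only [coneC, Tmap, Set.mem_setOf_eq]
      have harg : π/2 + arctan s + arctan t - π/2 - arctan s = arctan t := by ring
      rw [harg, Real.cos_arctan, Real.sin_arctan, Real.cos_arctan, Real.sin_arctan]
      have hct : (0:ℝ) < Real.sqrt (1 + t^2) := by positivity
      have hcs : (0:ℝ) < Real.sqrt (1 + s^2) := by positivity
      have e1 : 1 / Real.sqrt (1+t^2) * y.1 + t / Real.sqrt (1+t^2) * y.2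
          = (y.1 + t*y.2) / Real.sqrt (1+t^2) := by ring
      have e2 : s / Real.sqrt (1+s^2) * y.1 + 1 / Real.sqrt (1+s^2) * y.2
          = (s*y.1 + y.2) / Real.sqrt (1+s^2) := by ring
      rw [e1, e2, le_div_iff₀ hct, le_div_iff₀ hcs, zero_mul, zero_mul]
      constructor
      · intro hy
        constructor
        · rcases lt_trichotomy y.2 0 with h2 | h2 | h2
          · rcases le_or_gt y.1 0 with h1 | h1
            · exfalso
              have h0 := hnegpt _ hy h1 h2.le
              rw [h0] at h2
              norm_num at h2
            · have hb := hsB y hy h1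
              have f1 := mul_le_mul_of_nonneg_left hb ht0
              have f2 := mul_le_mul_of_nonneg_right hst h1.le
              nlinarith [f1, f2]
          · rcases le_or_gt 0 y.1 with h1 | h1
            · have : t * y.2 = 0 := by rw [h2]; ring
              linarith
            · exfalso
              have h0 := hnegpt _ hy h1.le h2.le
              rw [h0] at h1
              norm_num at h1
          · have hb := htB y hy h2
            linarith
        · rcases lt_trichotomy y.1 0 with h1 | h1 | h1
          · rcases le_or_gt y.2 0 with h2 | h2
            · exfalso
              have h0 := hnegpt _ hy h1.le h2
              rw [h0] at h1
              norm_num at h1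
            · have hb := htB y hy h2
              have f1 := mul_le_mul_of_nonneg_left hb hs0
              have f2 := mul_le_mul_of_nonneg_right hst h2.le
              nlinarith [f1, f2]
          · rcases le_or_gt 0 y.2 with h2 | h2
            · have : s * y.1 = 0 := by rw [h1]; ring
              linarith
            · exfalso
              have h0 := hnegpt _ hy h1.le h2.le
              rw [h0] at h2
              norm_num at h2
          · have hb := hsB y hy h1
            linarith
      · rintro ⟨h1, h2⟩
        rcases lt_or_eq_of_le hst with hlt | heqst
        · have hd : (0:ℝ) < 1 - s*t := by linarith
          have hy : y = ((y.1 + t*y.2)/(1-s*t)) • ((1:ℝ), -s)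
              + ((s*y.1 + y.2)/(1-s*t)) • ((-t:ℝ), (1:ℝ)) := by
            rw [Prod.ext_iff]
            simp only [Prod.fst_add, Prod.snd_add, Prod.smul_fst, Prod.smul_snd, smul_eq_mul]
            constructor <;> (rw [div_mul_eq_mul_div, div_mul_eq_mul_div, ← add_div, eq_div_iff hd.ne']; ring)
          rw [hy]
          exact hadd _ (hcone _ (div_nonneg h1 hd.le) _ hsC)
            _ (hcone _ (div_nonneg h2 hd.le) _ htC)
        · have htpos : 0 < t := by
            rcases lt_or_eq_of_le ht0 with h' | h'
            · exact h'
            · exfalso; rw [← h'] at heqst; simp at heqst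
          have hmu : ((-1:ℝ), s) ∈ C := by
            have hmem := hcone (1/t) (by positivity) _ htC
            have heq2 : (1/t : ℝ) • ((-t:ℝ), (1:ℝ)) = ((-1:ℝ), s) := by
              rw [Prod.ext_iff]
              simp only [Prod.smul_fst, Prod.smul_snd, smul_eq_mul]
              constructor
              · field_simp
              · field_simp
                linarith
            rwa [heq2] at hmem
          have hy : y = y.1 • ((1:ℝ), -s) + (s*y.1 + y.2) • ((0:ℝ), (1:ℝ)) := by
            rw [Prod.ext_iff]
            simp only [Prod.fst_add, Prod.snd_add, Prod.smul_fst, Prod.smul_snd, smul_eq_mul]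
            constructor
            · ring
            · ring
          rw [hy]
          refine hadd _ ?_ _ (hcone _ h2 _ he2)
          rcases le_or_gt 0 y.1 with h | h
          · exact hcone _ h _ hsC
          · have heq3 : y.1 • ((1:ℝ), -s) = (-y.1) • ((-1:ℝ), s) := by
              rw [Prod.ext_iff]
              simp only [Prod.smul_fst, Prod.smul_snd, smul_eq_mul]
              constructor <;> ring
            rw [heq3]
            exact hcone _ (by linarith) _ hmu
end
end

section
/- Let γ₁, γ₂ ∈ [π/2, π], φ₁ ∈ [0, γ₁ − π/2] \ {γ₁ − π, π/2}, and φ₂ ∈ [0, γ₂ − π/2] \ {γ₂ − π, π/2} with φ₁ ≤ φ₂ and φ₁' ≤ φ₂' (where φᵢ' := γᵢ − π/2 − φᵢ). Then C_{γ₁}^{φ₁} ⊆ C_{γ₂}^{φ₂}, and for any instance (X, f) of a biobjective minimization problem, any α ≥ 1, and any x, x' ∈ X: if x' is α-approximated by x with respect to ≤_{γ₁}^{φ₁}, then x' is α-approximated by x with respect to ≤_{γ₂}^{φ₂}. -/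
open Real Set Pointwise

noncomputable section

/-- If a half-plane constraint holds for normal angles `a` and `b`, it holds for any
normal angle `θ ∈ [a, b]`, provided `b - a < π`. -/
lemma sector_step (a b θ y1 y2 : ℝ) (hba : b - a < Real.pi)
    (h1 : a ≤ θ) (h2 : θ ≤ b)
    (ha : 0 ≤ Real.cos a * y1 + Real.sin a * y2)
    (hb : 0 ≤ Real.cos b * y1 + Real.sin b * y2) :
    0 ≤ Real.cos θ * y1 + Real.sin θ * y2 := by
  rcases eq_or_lt_of_le (h1.trans h2) with heq | hlt
  · have hθ : θ = a := le_antisymm (heq ▸ h2) h1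
    rw [hθ]; exact ha
  · have hs : 0 < Real.sin (b - a) :=
      Real.sin_pos_of_pos_of_lt_pi (by linarith) hba
    have hs1 : 0 ≤ Real.sin (b - θ) :=
      Real.sin_nonneg_of_nonneg_of_le_pi (by linarith) (by linarith)
    have hs2 : 0 ≤ Real.sin (θ - a) :=
      Real.sin_nonneg_of_nonneg_of_le_pi (by linarith) (by linarith)
    have key : Real.sin (b - a) * (Real.cos θ * y1 + Real.sin θ * y2)
        = Real.sin (b - θ) * (Real.cos a * y1 + Real.sin a * y2)
          + Real.sin (θ - a) * (Real.cos b * y1 + Real.sin b * y2) := by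
      rw [Real.sin_sub, Real.sin_sub, Real.sin_sub]; ring
    nlinarith [mul_nonneg hs1 ha, mul_nonneg hs2 hb]

/-- if `φ₁ ≤ φ₂` and `φ₁' ≤ φ₂'` then `C_{γ₁}^{φ₁} ⊆ C_{γ₂}^{φ₂}`, and
`α`-approximation with respect to `≤_{γ₁}^{φ₁}` implies `α`-approximation with respect
to `≤_{γ₂}^{φ₂}`. -/
theorem stmt_2 (γ₁ γ₂ φ₁ φ₂ : ℝ)
    (hγ₁ : γ₁ ∈ Set.Icc (Real.pi/2) Real.pi) (hγ₂ : γ₂ ∈ Set.Icc (Real.pi/2) Real.pi)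
    (hφ₁ : φ₁ ∈ PhiDomain γ₁) (hφ₂ : φ₂ ∈ PhiDomain γ₂)
    (hle : φ₁ ≤ φ₂) (hle' : γ₁ - Real.pi/2 - φ₁ ≤ γ₂ - Real.pi/2 - φ₂) :
    coneC γ₁ φ₁ ⊆ coneC γ₂ φ₂ ∧
      ∀ (X : Type), Nonempty X → ∀ f : X → ℝ × ℝ,
        (∀ x, 0 < (f x).1 ∧ 0 < (f x).2) →
        ∀ α : ℝ, 1 ≤ α → ∀ x x' : X,
          leC γ₁ φ₁ (f x) (α • f x') → leC γ₂ φ₂ (f x) (α • f x') := by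
  have hπ : 0 < Real.pi := Real.pi_pos
  have hsub : coneC γ₁ φ₁ ⊆ coneC γ₂ φ₂ := by
    intro y hy
    obtain ⟨h1, h2⟩ := hy
    simp only [coneC, Tmap, Set.mem_setOf_eq] at *
    have hb : 0 ≤ Real.cos (Real.pi/2 - φ₁) * y.1 + Real.sin (Real.pi/2 - φ₁) * y.2 := by
      rw [Real.cos_pi_div_two_sub, Real.sin_pi_div_two_sub]; exact h2
    constructor
    · exact sector_step (γ₁ - Real.pi/2 - φ₁) (Real.pi/2 - φ₁) (γ₂ - Real.pi/2 - φ₂)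
        y.1 y.2 (by linarith [hγ₁.1]) hle'
        (by linarith [hγ₂.2]) h1 hb
    · have := sector_step (γ₁ - Real.pi/2 - φ₁) (Real.pi/2 - φ₁) (Real.pi/2 - φ₂)
        y.1 y.2 (by linarith [hγ₁.1]) (by linarith [hγ₂.2]) (by linarith) h1 hb
      rwa [Real.cos_pi_div_two_sub, Real.sin_pi_div_two_sub] at this
  exact ⟨hsub, fun X _ f _ α _ x x' h => hsub h⟩
end
end

section
/- Let γ₁, γ₂ ∈ [π/2, π] with γ₁ ≤ γ₂ and let (X, f) be an instance of a biobjective minimization problem. Then every γ₂-supported solution is γ₁-supported. In particular, every γ-supported solution (for any γ ∈ [π/2, π]) is efficient. -/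
open Real Set Pointwise

noncomputable section

lemma g_identity (a b θ y₁ y₂ : ℝ) :
    Real.sin (b - θ) * (Real.cos a * y₁ + Real.sin a * y₂) +
      Real.sin (θ - a) * (Real.cos b * y₁ + Real.sin b * y₂) =
    Real.sin (b - a) * (Real.cos θ * y₁ + Real.sin θ * y₂) := by
  rw [Real.sin_sub, Real.sin_sub, Real.sin_sub]
  ring

lemma g_key {a b θ y₁ y₂ : ℝ} (hba : b - a ≤ Real.pi/2) (haθ : a ≤ θ) (hθb : θ ≤ b)
    (ha : 0 ≤ Real.cos a * y₁ + Real.sin a * y₂)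
    (hb : 0 ≤ Real.cos b * y₁ + Real.sin b * y₂) :
    0 ≤ Real.cos θ * y₁ + Real.sin θ * y₂ := by
  have hpi := Real.pi_pos
  rcases eq_or_lt_of_le (le_trans haθ hθb) with h | h
  · have hθa : θ = a := le_antisymm (h ▸ hθb) haθ
    rwa [hθa]
  · have hsab : 0 < Real.sin (b - a) :=
      Real.sin_pos_of_pos_of_lt_pi (by linarith) (by linarith)
    have h1 : 0 ≤ Real.sin (b - θ) :=
      Real.sin_nonneg_of_nonneg_of_le_pi (by linarith) (by linarith)
    have h2 : 0 ≤ Real.sin (θ - a) :=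
      Real.sin_nonneg_of_nonneg_of_le_pi (by linarith) (by linarith)
    nlinarith [g_identity a b θ y₁ y₂, mul_nonneg h1 ha, mul_nonneg h2 hb]

/-- for `γ₁ ≤ γ₂`, every `γ₂`-supported solution is `γ₁`-supported; in
particular every `γ`-supported solution is efficient. -/
theorem stmt_3 (X : Type) (hX : Nonempty X) (f : X → ℝ × ℝ)
    (hf : ∀ x, 0 < (f x).1 ∧ 0 < (f x).2)
    (γ₁ γ₂ : ℝ) (hγ₁ : γ₁ ∈ Set.Icc (Real.pi/2) Real.pi)
    (hγ₂ : γ₂ ∈ Set.Icc (Real.pi/2) Real.pi) (h12 : γ₁ ≤ γ₂) :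
    (∀ x : X, GammaSupported γ₂ f x → GammaSupported γ₁ f x) ∧
      (∀ γ ∈ Set.Icc (Real.pi/2) Real.pi, ∀ x : X, GammaSupported γ f x → Efficient f x) := by
  have hpi := Real.pi_pos
  obtain ⟨hγ₁l, hγ₁u⟩ := hγ₁
  obtain ⟨hγ₂l, hγ₂u⟩ := hγ₂
  constructor
  · rintro x ⟨φ₂, hφ₂, hopt⟩
    obtain ⟨⟨hφ₂0, hφ₂u⟩, hφ₂ne⟩ := hφ₂
    simp only [Set.mem_insert_iff, Set.mem_singleton_iff, not_or] at hφ₂ne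
    obtain ⟨hne1, hne2⟩ := hφ₂ne
    have hφ₂lt : φ₂ < Real.pi/2 := lt_of_le_of_ne (by linarith) hne2
    set φ₁ := min φ₂ (γ₁ - Real.pi/2) with hφ₁def
    have hφ₁0 : 0 ≤ φ₁ := le_min hφ₂0 (by linarith)
    have hφ₁u : φ₁ ≤ γ₁ - Real.pi/2 := min_le_right _ _
    have hφ₁φ₂ : φ₁ ≤ φ₂ := min_le_left _ _
    have hkey1 : φ₂ - φ₁ ≤ γ₂ - γ₁ := by
      rcases min_cases φ₂ (γ₁ - Real.pi/2) with ⟨h, _⟩ | ⟨h, _⟩ <;>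
        rw [hφ₁def, h] <;> linarith
    have hkey2 : φ₂ - φ₁ ≤ Real.pi - γ₁ := by
      rcases min_cases φ₂ (γ₁ - Real.pi/2) with ⟨h, _⟩ | ⟨h, _⟩ <;>
        rw [hφ₁def, h] <;> linarith
    refine ⟨φ₁, ⟨⟨hφ₁0, hφ₁u⟩, ?_⟩, ?_⟩
    · simp only [Set.mem_insert_iff, Set.mem_singleton_iff, not_or]
      constructor
      · intro heq
        have hγ₁π : γ₁ = Real.pi := by linarith [heq ▸ hφ₁0]
        have hφ₁z : φ₁ = 0 := by rw [heq, hγ₁π]; ring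
        have hγ₂π : γ₂ = Real.pi := le_antisymm hγ₂u (by linarith)
        have hφ₂z : φ₂ = 0 := by
          rcases min_cases φ₂ (γ₁ - Real.pi/2) with ⟨h, _⟩ | ⟨h, _⟩
          · rw [hφ₁def, h] at hφ₁z; linarith
          · rw [hφ₁def, h, hγ₁π] at hφ₁z; linarith
        exact hne1 (by rw [hφ₂z, hγ₂π]; ring)
      · intro heq; linarith [heq ▸ lt_of_le_of_lt hφ₁φ₂ hφ₂lt]
    · rintro ⟨x', hne, hle⟩
      apply hopt
      refine ⟨x', hne, ?_⟩
      obtain ⟨hc1, hc2⟩ := hle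
      set y₁ := ((f x - f x') : ℝ × ℝ).1 with hy₁
      set y₂ := ((f x - f x') : ℝ × ℝ).2 with hy₂
      have ha : 0 ≤ Real.cos (γ₁ - Real.pi/2 - φ₁) * y₁ +
          Real.sin (γ₁ - Real.pi/2 - φ₁) * y₂ := hc1
      have hb : 0 ≤ Real.cos (Real.pi/2 - φ₁) * y₁ + Real.sin (Real.pi/2 - φ₁) * y₂ := by
        rw [Real.cos_pi_div_two_sub, Real.sin_pi_div_two_sub]; exact hc2
      have hwidth : (Real.pi/2 - φ₁) - (γ₁ - Real.pi/2 - φ₁) ≤ Real.pi/2 := by linarith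
      constructor
      · exact g_key hwidth (by linarith) (by linarith) ha hb
      · show 0 ≤ Real.sin φ₂ * y₁ + Real.cos φ₂ * y₂
        have := g_key (θ := Real.pi/2 - φ₂) hwidth (by linarith) (by linarith) ha hb
        rwa [Real.cos_pi_div_two_sub, Real.sin_pi_div_two_sub] at this
  · rintro γ ⟨hγl, hγu⟩ x ⟨φ, ⟨⟨hφ0, hφu⟩, -⟩, hopt⟩ ⟨x', hne, h1, h2⟩
    apply hopt
    refine ⟨x', hne, ?_, ?_⟩ <;>
    · simp only [Tmap, Prod.fst_sub, Prod.snd_sub]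
      have hs1 : 0 ≤ Real.sin (γ - Real.pi/2 - φ) :=
        Real.sin_nonneg_of_nonneg_of_le_pi (by linarith) (by linarith)
      have hc1 : 0 ≤ Real.cos (γ - Real.pi/2 - φ) :=
        Real.cos_nonneg_of_mem_Icc ⟨by linarith, by linarith⟩
      have hs2 : 0 ≤ Real.sin φ :=
        Real.sin_nonneg_of_nonneg_of_le_pi (by linarith) (by linarith)
      have hc2 : 0 ≤ Real.cos φ :=
        Real.cos_nonneg_of_mem_Icc ⟨by linarith, by linarith⟩
      have hd1 : 0 ≤ (f x).1 - (f x').1 := by linarith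
      have hd2 : 0 ≤ (f x).2 - (f x').2 := by linarith
      positivity
end
end

section
/- For every γ ∈ (π/2, π], every φ ∈ [0, γ − π/2] \ {γ − π, π/2}, and every α ≥ 1, there exists an instance (X, f) of a biobjective minimization problem such that the set of solutions that are optimal with respect to ≤_γ^φ is not an α-approximation with respect to the componentwise order ≤. -/
open Real Set Pointwise

noncomputable section

/-- Key construction: if the cone contains `(-1, M)` with `M ≥ 0`, we can build a
two-point instance where the optimal set is not an `α`-approximation. -/
lemma key1 (γ φ α M : ℝ) (hα : 1 ≤ α) (hM : 0 ≤ M)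
    (hd : ((-1 : ℝ), M) ∈ coneC γ φ) :
    ∃ (X : Type) (f : X → ℝ × ℝ), Nonempty X ∧
      (∀ x, 0 < (f x).1 ∧ 0 < (f x).2) ∧
      ¬ IsApprox α f {x : X | OptimalWrt γ φ f x} := by
  obtain ⟨h1, h2⟩ := hd
  simp only [Tmap] at h1 h2
  refine ⟨Bool, fun b => if b then (1 + α, 1) else (1, α * M + 1), ⟨true⟩, ?_, ?_⟩
  · rintro (_|_) <;> constructor <;> simp <;> nlinarith
  · intro h
    obtain ⟨x', hopt, ha, hb⟩ := h false
    cases x' with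
    | true =>
      simp only [if_true, if_neg Bool.false_ne_true] at ha hb
      simp at ha
      linarith
    | false =>
      refine hopt ⟨true, ?_, ?_⟩
      · simp only [if_true, if_neg Bool.false_ne_true, Ne, Prod.ext_iff]
        intro ⟨c1, c2⟩
        linarith
      · simp only [leC, coneC, Tmap, if_true, if_neg Bool.false_ne_true,
          Set.mem_setOf_eq, Prod.fst_sub, Prod.snd_sub]
        constructor <;> nlinarith
    
/-- Symmetric key construction: the cone contains `(M, -1)` with `M ≥ 0`. -/
lemma key2 (γ φ α M : ℝ) (hα : 1 ≤ α) (hM : 0 ≤ M)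
    (hd : ((M : ℝ), (-1 : ℝ)) ∈ coneC γ φ) :
    ∃ (X : Type) (f : X → ℝ × ℝ), Nonempty X ∧
      (∀ x, 0 < (f x).1 ∧ 0 < (f x).2) ∧
      ¬ IsApprox α f {x : X | OptimalWrt γ φ f x} := by
  obtain ⟨h1, h2⟩ := hd
  simp only [Tmap] at h1 h2
  refine ⟨Bool, fun b => if b then (1, 1 + α) else (α * M + 1, 1), ⟨true⟩, ?_, ?_⟩
  · rintro (_|_) <;> constructor <;> simp <;> nlinarith
  · intro h
    obtain ⟨x', hopt, ha, hb⟩ := h false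
    cases x' with
    | true =>
      simp only [if_true, if_neg Bool.false_ne_true] at ha hb
      simp at hb
      linarith
    | false =>
      refine hopt ⟨true, ?_, ?_⟩
      · simp only [if_true, if_neg Bool.false_ne_true, Ne, Prod.ext_iff]
        intro ⟨c1, c2⟩
        linarith
      · simp only [leC, coneC, Tmap, if_true, if_neg Bool.false_ne_true,
          Set.mem_setOf_eq, Prod.fst_sub, Prod.snd_sub]
        constructor <;> nlinarith

/-- for every `γ ∈ (π/2, π]`, admissible `φ`, and `α ≥ 1`, there is an
instance where the set of solutions optimal with respect to `≤_γ^φ` is not an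
`α`-approximation with respect to the componentwise order. -/
theorem stmt_4 (γ φ α : ℝ) (hγ : γ ∈ Set.Ioc (Real.pi/2) Real.pi)
    (hφ : φ ∈ PhiDomain γ) (hα : 1 ≤ α) :
    ∃ (X : Type) (f : X → ℝ × ℝ), Nonempty X ∧
      (∀ x, 0 < (f x).1 ∧ 0 < (f x).2) ∧
      ¬ IsApprox α f {x : X | OptimalWrt γ φ f x} := by
  have hpi := Real.pi_pos
  obtain ⟨⟨hφ0, hφle⟩, hφne⟩ := hφ
  simp only [Set.mem_insert_iff, Set.mem_singleton_iff, not_or] at hφne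
  have hφ'0 : (0:ℝ) ≤ γ - Real.pi/2 - φ := by linarith
  have hφ'le : γ - Real.pi/2 - φ ≤ Real.pi/2 := by
    have := hγ.2; linarith
  have hφle2 : φ ≤ Real.pi/2 := by
    have := hγ.2; linarith
  have hcosφ : 0 < Real.cos φ := by
    rcases lt_or_eq_of_le hφle2 with h2 | h2
    · exact Real.cos_pos_of_mem_Ioo ⟨by linarith, h2⟩
    · exact absurd h2 hφne.2
  have hsinφ : 0 ≤ Real.sin φ := Real.sin_nonneg_of_nonneg_of_le_pi hφ0 (by linarith)
  have hsinφ' : 0 ≤ Real.sin (γ - Real.pi/2 - φ) :=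
    Real.sin_nonneg_of_nonneg_of_le_pi hφ'0 (by linarith)
  have hcosφ' : 0 ≤ Real.cos (γ - Real.pi/2 - φ) :=
    Real.cos_nonneg_of_mem_Icc ⟨by linarith, hφ'le⟩
  rcases lt_or_eq_of_le hsinφ' with hs | hs
  · -- sin φ' > 0 : use (-1, M)
    refine key1 γ φ α (max (Real.cos (γ - Real.pi/2 - φ) / Real.sin (γ - Real.pi/2 - φ)) (Real.sin φ / Real.cos φ)) hα
      (le_trans (div_nonneg hcosφ' hs.le) (le_max_left _ _)) ⟨?_, ?_⟩
    · simp only [Tmap]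
      have : Real.cos (γ - Real.pi/2 - φ) / Real.sin (γ - Real.pi/2 - φ) ≤ max (Real.cos (γ - Real.pi/2 - φ) / Real.sin (γ - Real.pi/2 - φ)) (Real.sin φ / Real.cos φ) := le_max_left _ _
      rw [div_le_iff₀ hs] at this
      nlinarith
    · simp only [Tmap]
      have : Real.sin φ / Real.cos φ ≤ max (Real.cos (γ - Real.pi/2 - φ) / Real.sin (γ - Real.pi/2 - φ)) (Real.sin φ / Real.cos φ) := le_max_right _ _
      rw [div_le_iff₀ hcosφ] at this
      nlinarith
  · -- sin φ' = 0, so φ' = 0 and sin φ > 0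
    have hφ'eq : γ - Real.pi/2 - φ = 0 := by
      by_contra hne
      have h0 : 0 < γ - Real.pi/2 - φ := lt_of_le_of_ne hφ'0 (Ne.symm hne)
      have := Real.sin_pos_of_pos_of_lt_pi h0 (by linarith)
      linarith [hs]
    have hsφpos : 0 < Real.sin φ := by
      have hφpos : 0 < φ := by
        have h1 := hγ.1; linarith
      exact Real.sin_pos_of_pos_of_lt_pi hφpos (by linarith)
    refine key2 γ φ α (Real.cos φ / Real.sin φ) hα (div_nonneg hcosφ.le hsφpos.le) ⟨?_, ?_⟩
    · simp only [Tmap]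
      rw [show Real.sin (γ - Real.pi/2 - φ) = 0 from hs.symm]
      nlinarith [div_nonneg hcosφ.le hsφpos.le]
    · simp only [Tmap]
      have : Real.sin φ * (Real.cos φ / Real.sin φ) = Real.cos φ := by
        field_simp
      linarith
end
end

section
/- Let (X, f) be an instance of a biobjective minimization problem such that f(X) + ℝ²_≥ is closed. Let X_W ⊆ X be a set of solutions that, for every φ ∈ (0, π/2), contains a solution minimizing sin(φ)·f₁(x) + cos(φ)·f₂(x) over x ∈ X. Then X_W is a 2-approximation with respect to the componentwise order ≤. -/
open Real Set Pointwise

noncomputable section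

/-- a set containing, for every `φ ∈ (0, π/2)`, a minimizer of the weighted
sum `sin φ · f₁ + cos φ · f₂` is a `2`-approximation. -/
theorem stmt_5 (X : Type) (hX : Nonempty X) (f : X → ℝ × ℝ)
    (hf : ∀ x, 0 < (f x).1 ∧ 0 < (f x).2)
    (hclosed : IsClosed (Set.range f + {y : ℝ × ℝ | 0 ≤ y.1 ∧ 0 ≤ y.2}))
    (W : Set X)
    (hW : ∀ φ ∈ Set.Ioo 0 (Real.pi/2), ∃ x ∈ W, ∀ x' : X,
      Real.sin φ * (f x).1 + Real.cos φ * (f x).2 ≤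
        Real.sin φ * (f x').1 + Real.cos φ * (f x').2) :
    IsApprox 2 f W := by
  intro x
  obtain ⟨ha, hb⟩ := hf x
  set a := (f x).1
  set b := (f x).2
  set φ := Real.arctan (b / a) with hφdef
  have hφ0 : 0 < φ := by rw [hφdef, ← Real.arctan_zero]; exact Real.arctan_strictMono (div_pos hb ha)
  have hφlt : φ < Real.pi / 2 := Real.arctan_lt_pi_div_two _
  have hcos : 0 < Real.cos φ := Real.cos_arctan_pos _
  have hsin : 0 < Real.sin φ := Real.sin_pos_of_pos_of_lt_pi hφ0
    (lt_trans hφlt (by linarith [Real.pi_pos]))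
  have htan : Real.tan φ = b / a := Real.tan_arctan _
  have hkey : Real.sin φ * a = Real.cos φ * b := by
    have : Real.sin φ / Real.cos φ = b / a := by rw [← Real.tan_eq_sin_div_cos]; exact htan
    field_simp at this
    linarith [this]
  obtain ⟨x', hx'W, hmin⟩ := hW φ ⟨hφ0, hφlt⟩
  refine ⟨x', hx'W, ?_, ?_⟩
  · have h := hmin x
    obtain ⟨ha', hb'⟩ := hf x'
    have : Real.sin φ * (f x').1 ≤ Real.sin φ * (2 * a) := by nlinarith
    exact le_of_mul_le_mul_left this hsin
  · have h := hmin x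
    obtain ⟨ha', hb'⟩ := hf x'
    have : Real.cos φ * (f x').2 ≤ Real.cos φ * (2 * b) := by nlinarith
    exact le_of_mul_le_mul_left this hcos
end
end

section
/- For every γ ∈ (π/2, π) and every α ≥ 1, there exists an instance (X, f) of a biobjective minimization problem with exactly two solutions x₁, x₂ such that x₁ is optimal with respect to ≤_γ^φ for every φ ∈ [0, γ − π/2], but the set {x₁} is not an α-approximation with respect to the componentwise order ≤. (Concretely, one may take f(x₁) = (α + 1, 1) and f(x₂) = (1, (−cos γ / sin γ)·(α + 1) + 1).) -/
open Real Set Pointwise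

noncomputable section

/-- for `γ ∈ (π/2, π)` and `α ≥ 1`, there is an instance with exactly two
solutions in which `x₁` is optimal with respect to `≤_γ^φ` for every `φ ∈ [0, γ - π/2]`,
but `{x₁}` is not an `α`-approximation. -/
theorem stmt_6 (γ α : ℝ) (hγ : γ ∈ Set.Ioo (Real.pi/2) Real.pi) (hα : 1 ≤ α) :
    ∃ f : Fin 2 → ℝ × ℝ,
      (∀ x, 0 < (f x).1 ∧ 0 < (f x).2) ∧
      f 0 = (α + 1, 1) ∧
      f 1 = (1, (-Real.cos γ / Real.sin γ) * (α + 1) + 1) ∧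
      (∀ φ ∈ Set.Icc 0 (γ - Real.pi/2), OptimalWrt γ φ f 0) ∧
      ¬ IsApprox α f {0} := by
  obtain ⟨hγ1, hγ2⟩ := hγ
  have hπ := Real.pi_pos
  have hsinγ : 0 < Real.sin γ := Real.sin_pos_of_pos_of_lt_pi (by linarith) hγ2
  have hcosγ : Real.cos γ < 0 := Real.cos_neg_of_pi_div_two_lt_of_lt hγ1 (by linarith)
  have hc : 0 < -Real.cos γ / Real.sin γ := div_pos (by linarith) hsinγ
  set B : ℝ := (-Real.cos γ / Real.sin γ) * (α + 1) + 1 with hB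
  have hcB : 0 < (-Real.cos γ / Real.sin γ) * (α + 1) := mul_pos hc (by linarith)
  have hBpos : 0 < B := by simp only [hB]; linarith
  have hsB : Real.sin γ * B = -Real.cos γ * (α + 1) + Real.sin γ := by
    rw [hB, div_eq_mul_inv]
    have h := mul_inv_cancel₀ hsinγ.ne'
    linear_combination (-Real.cos γ * (α + 1)) * h
  refine ⟨![(α + 1, 1), (1, B)], ?_, rfl, rfl, ?_, ?_⟩
  · intro x
    fin_cases x <;> simp <;> linarith
  · intro φ hφ ⟨x', hne, hle⟩
    obtain ⟨hφ0, hφ1⟩ := hφ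
    by_cases hx0 : x' = 0
    · exact hne (by rw [hx0])
    · have hx1 : x' = 1 := by omega
      subst hx1
      have hcosφ : 0 < Real.cos φ :=
        Real.cos_pos_of_mem_Ioo ⟨by linarith, by linarith⟩
      have hsinφ : 0 ≤ Real.sin φ :=
        Real.sin_nonneg_of_nonneg_of_le_pi hφ0 (by linarith)
      have hcsub : Real.cos (γ - φ) ≤ 0 :=
        Real.cos_nonpos_of_pi_div_two_le_of_le (by linarith) (by linarith)
      have hcs : Real.cos (γ - φ) = Real.cos γ * Real.cos φ + Real.sin γ * Real.sin φ :=
        Real.cos_sub γ φ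
      obtain ⟨-, hT2⟩ := hle
      simp only [Tmap, coneC, Set.mem_setOf_eq, Matrix.cons_val_one, Matrix.cons_val_zero,
        Matrix.head_cons, Prod.fst_sub, Prod.snd_sub] at hT2
      have hT2' : 0 ≤ Real.sin φ * α + Real.cos φ * (1 - B) := by
        convert hT2 using 2 <;> ring
      have key : Real.sin γ * (Real.sin φ * α + Real.cos φ * (1 - B)) < 0 := by
        have h1 : Real.sin γ * (Real.sin φ * α + Real.cos φ * (1 - B)) =
            α * Real.cos (γ - φ) + Real.cos γ * Real.cos φ := by
          rw [hcs]; nlinarith [hsB]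
        have h2 : α * Real.cos (γ - φ) ≤ 0 := mul_nonpos_of_nonneg_of_nonpos (by linarith) hcsub
        have h3 : Real.cos γ * Real.cos φ < 0 := mul_neg_of_neg_of_pos hcosγ hcosφ
        linarith
      nlinarith [mul_nonneg hsinγ.le hT2']
  · intro h
    obtain ⟨x', hx', h1, h2⟩ := h 1
    simp only [Set.mem_singleton_iff] at hx'
    subst hx'
    simp only [Matrix.cons_val_one, Matrix.cons_val_zero, Matrix.head_cons] at h1
    linarith
end
end

section
/- Let (X, f) be an instance of a biobjective minimization problem, let α ≥ 1 and w₁, w₂ > 0. Suppose x ∈ X satisfies max{w₁·f₁(x), w₂·f₂(x)} ≤ α·max{w₁·f₁(x''), w₂·f₂(x'')} for all x'' ∈ X, and x' ∈ X satisfies w₁·f₁(x') = w₂·f₂(x'). Then f₁(x) ≤ α·f₁(x') and f₂(x) ≤ α·f₂(x'), i.e., x' is α-approximated by x with respect to the componentwise order ≤. -/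
open Real Set Pointwise

noncomputable section

/-- if `x` is `α`-approximate for the weighted max-ordering scalarization
with weights `w₁, w₂ > 0` and `w₁ · f₁(x') = w₂ · f₂(x')`, then `x'` is `α`-approximated
by `x` with respect to the componentwise order. -/
theorem stmt_7 (X : Type) (hX : Nonempty X) (f : X → ℝ × ℝ)
    (hf : ∀ x, 0 < (f x).1 ∧ 0 < (f x).2)
    (α w₁ w₂ : ℝ) (hα : 1 ≤ α) (hw₁ : 0 < w₁) (hw₂ : 0 < w₂)
    (x x' : X)
    (hx : ∀ x'' : X, max (w₁ * (f x).1) (w₂ * (f x).2) ≤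
      α * max (w₁ * (f x'').1) (w₂ * (f x'').2))
    (hx' : w₁ * (f x').1 = w₂ * (f x').2) :
    (f x).1 ≤ α * (f x').1 ∧ (f x).2 ≤ α * (f x').2 := by
  have h := hx x'
  rw [hx', max_self] at h
  constructor
  · have h1 : w₁ * (f x).1 ≤ α * (w₂ * (f x').2) := le_trans (le_max_left _ _) h
    rw [← hx'] at h1
    nlinarith
  · have h2 : w₂ * (f x).2 ≤ α * (w₂ * (f x').2) := le_trans (le_max_right _ _) h
    nlinarith
end
end

section
/- Let γ ∈ [π/2, π], φ ∈ [0, γ − π/2] \ {γ − π, π/2}, α ≥ 1, and let (X, f) be an instance of a biobjective minimization problem. If x' ∈ X is α-approximated by x ∈ X with respect to ≤_γ^φ, then f₁(x) ≤ β·f₁(x') and f₂(x) ≤ β·f₂(x') for β := α·(1 + max{(f₁(x')/f₂(x'))·tan(φ), (f₂(x')/f₁(x'))·tan(φ')}), where φ' = γ − π/2 − φ. -/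
open Real Set Pointwise

noncomputable section

/-- if `x'` is `α`-approximated by `x` with respect to `≤_γ^φ`, then `x`
approximates `x'` componentwise with factor
`α · (1 + max{(f₁(x')/f₂(x'))·tan φ, (f₂(x')/f₁(x'))·tan φ'})`. -/
theorem stmt_8 (γ φ α : ℝ) (hγ : γ ∈ Set.Icc (Real.pi/2) Real.pi)
    (hφ : φ ∈ PhiDomain γ) (hα : 1 ≤ α)
    (X : Type) (hX : Nonempty X) (f : X → ℝ × ℝ)
    (hf : ∀ x, 0 < (f x).1 ∧ 0 < (f x).2)
    (x x' : X) (h : leC γ φ (f x) (α • f x'))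
    (β : ℝ)
    (hβ : β = α * (1 + max ((f x').1 / (f x').2 * Real.tan φ)
      ((f x').2 / (f x').1 * Real.tan (γ - Real.pi/2 - φ)))) :
    (f x).1 ≤ β * (f x').1 ∧ (f x).2 ≤ β * (f x').2 := by
  obtain ⟨⟨hφ0, hφle⟩, hφne⟩ := hφ
  have hne1 : φ ≠ γ - Real.pi := fun hc => hφne (by simp [hc])
  have hne2 : φ ≠ Real.pi/2 := fun hc => hφne (by simp [hc])
  have hγ1 := hγ.1; have hγ2 := hγ.2
  have hπ := Real.pi_pos
  set φ' := γ - Real.pi/2 - φ with hφ'def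
  have hφlt : φ < Real.pi/2 := lt_of_le_of_ne (by linarith) hne2
  have hφ'0 : 0 ≤ φ' := by simp [hφ'def]; linarith
  have hφ'lt : φ' < Real.pi/2 := by
    have : φ' ≠ Real.pi/2 := fun hc => hne1 (by simp [hφ'def] at hc; linarith)
    exact lt_of_le_of_ne (by simp [hφ'def]; linarith) this
  have hcos : 0 < Real.cos φ := Real.cos_pos_of_mem_Ioo ⟨by linarith, hφlt⟩
  have hcos' : 0 < Real.cos φ' := Real.cos_pos_of_mem_Ioo ⟨by linarith, hφ'lt⟩
  have hsin : 0 ≤ Real.sin φ := Real.sin_nonneg_of_nonneg_of_le_pi hφ0 (by linarith)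
  have hφ'pi : φ' ≤ Real.pi := by rw [hφ'def]; linarith
  have hsin' : 0 ≤ Real.sin φ' := Real.sin_nonneg_of_nonneg_of_le_pi hφ'0 hφ'pi
  obtain ⟨ha1, ha2⟩ := hf x
  obtain ⟨hb1, hb2⟩ := hf x'
  set a1 := (f x).1; set a2 := (f x).2; set b1 := (f x').1; set b2 := (f x').2
  simp only [leC, coneC, Tmap, Set.mem_setOf_eq, Prod.fst_sub, Prod.snd_sub,
    Prod.smul_fst, Prod.smul_snd, smul_eq_mul] at h
  obtain ⟨h1, h2⟩ := h
  set M := max (b1 / b2 * Real.tan φ) (b2 / b1 * Real.tan φ') with hM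
  have hα0 : (0:ℝ) < α := by linarith
  constructor
  · -- first component, uses φ'
    have hMge : b2 / b1 * (Real.sin φ' / Real.cos φ') ≤ M := by
      rw [hM, ← Real.tan_eq_sin_div_cos]; exact le_max_right _ _
    have step2 : b2 * Real.sin φ' ≤ M * (b1 * Real.cos φ') := by
      have := mul_le_mul_of_nonneg_right hMge (le_of_lt (mul_pos hb1 hcos'))
      calc b2 * Real.sin φ' = b2 / b1 * (Real.sin φ' / Real.cos φ') * (b1 * Real.cos φ') := by
            field_simp
        _ ≤ M * (b1 * Real.cos φ') := this
    have step1 : a1 * Real.cos φ' ≤ α * b1 * Real.cos φ' + α * b2 * Real.sin φ' := by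
      nlinarith [mul_nonneg hsin' (le_of_lt ha2)]
    rw [hβ]
    rw [← mul_le_mul_iff_of_pos_right hcos']
    nlinarith [mul_le_mul_of_nonneg_left step2 (le_of_lt hα0)]
  · -- second component, uses φ
    have hMge : b1 / b2 * (Real.sin φ / Real.cos φ) ≤ M := by
      rw [hM, ← Real.tan_eq_sin_div_cos]; exact le_max_left _ _
    have step2 : b1 * Real.sin φ ≤ M * (b2 * Real.cos φ) := by
      have := mul_le_mul_of_nonneg_right hMge (le_of_lt (mul_pos hb2 hcos))
      calc b1 * Real.sin φ = b1 / b2 * (Real.sin φ / Real.cos φ) * (b2 * Real.cos φ) := by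
            field_simp
        _ ≤ M * (b2 * Real.cos φ) := this
    have step1 : a2 * Real.cos φ ≤ α * b2 * Real.cos φ + α * b1 * Real.sin φ := by
      nlinarith [mul_nonneg hsin (le_of_lt ha1)]
    rw [hβ]
    rw [← mul_le_mul_iff_of_pos_right hcos]
    nlinarith [mul_le_mul_of_nonneg_left step2 (le_of_lt hα0)]
end
end

section
/- Let α ≥ 1, γ ∈ (π/2, π], φ ∈ (0, γ − π/2), and let (X, f) be an instance of a biobjective minimization problem. Set w₁ := √(sin φ)/√(cos φ') + √(cos φ)/√(sin φ') and w₂ := √(sin φ')/√(cos φ) + √(cos φ')/√(sin φ), where φ' = γ − π/2 − φ. If x ∈ X is α-approximate for the weighted max-ordering scalarization of I_γ^φ with weights w₁, w₂, then every x' ∈ X with f₁(x')/f₂(x') = √(tan φ')/√(tan φ) is α-approximated by x with respect to ≤_γ^φ. -/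
open Real Set Pointwise

noncomputable section

lemma key_alg (p q r t a₁ a₂ : ℝ) (hp : p ≠ 0) (hq : q ≠ 0) (hr : r ≠ 0) (ht : t ≠ 0)
    (h : a₁ * (t * p) = a₂ * (r * q)) :
    (p/t + q/r) * (t^2 * a₁ + r^2 * a₂) = (r/q + t/p) * (p^2 * a₁ + q^2 * a₂) := by
  field_simp
  linear_combination ((p*r+q*t)*(q*t-p*r)) * h

/-- an `α`-approximate solution `x` for the weighted max-ordering
scalarization of `I_γ^φ` with weights `w₁, w₂` `α`-approximates, with respect to
`≤_γ^φ`, every `x'` with `f₁(x')/f₂(x') = √(tan φ')/√(tan φ)`. -/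
theorem stmt_10 (α γ φ φ' : ℝ) (hα : 1 ≤ α) (hγ : γ ∈ Set.Ioc (Real.pi/2) Real.pi)
    (hφ : φ ∈ Set.Ioo 0 (γ - Real.pi/2)) (hφ' : φ' = γ - Real.pi/2 - φ)
    (X : Type) (hX : Nonempty X) (f : X → ℝ × ℝ)
    (hf : ∀ x, 0 < (f x).1 ∧ 0 < (f x).2)
    (x : X) (hx : MaxOrdApprox α (wOne γ φ) (wTwo γ φ) γ φ f x) :
    ∀ x' : X, (f x').1 / (f x').2 = Real.sqrt (Real.tan φ') / Real.sqrt (Real.tan φ) →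
      leC γ φ (f x) (α • f x') := by
  intro x' hratio
  obtain ⟨hγ1, hγ2⟩ := hγ
  obtain ⟨hφ1, hφ2⟩ := hφ
  subst hφ'
  set ψ := γ - Real.pi/2 - φ with hψ
  have hψ0 : 0 < ψ := by simp only [hψ]; linarith
  have hψlt : ψ < Real.pi/2 := by simp only [hψ]; linarith
  have hφlt : φ < Real.pi/2 := by linarith
  have hpi := Real.pi_pos
  have hsφ : 0 < Real.sin φ := Real.sin_pos_of_pos_of_lt_pi hφ1 (by linarith)
  have hcφ : 0 < Real.cos φ := Real.cos_pos_of_mem_Ioo ⟨by linarith, hφlt⟩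
  have hsψ : 0 < Real.sin ψ := Real.sin_pos_of_pos_of_lt_pi hψ0 (by rw [hψ]; linarith)
  have hcψ : 0 < Real.cos ψ := Real.cos_pos_of_mem_Ioo ⟨by rw [hψ]; linarith, hψlt⟩
  set p := Real.sqrt (Real.sin φ) with hp
  set q := Real.sqrt (Real.cos φ) with hq
  set r := Real.sqrt (Real.sin ψ) with hr
  set t := Real.sqrt (Real.cos ψ) with ht
  have hp0 : 0 < p := Real.sqrt_pos.mpr hsφ
  have hq0 : 0 < q := Real.sqrt_pos.mpr hcφ
  have hr0 : 0 < r := Real.sqrt_pos.mpr hsψ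
  have ht0 : 0 < t := Real.sqrt_pos.mpr hcψ
  have hp2 : p^2 = Real.sin φ := Real.sq_sqrt hsφ.le
  have hq2 : q^2 = Real.cos φ := Real.sq_sqrt hcφ.le
  have hr2 : r^2 = Real.sin ψ := Real.sq_sqrt hsψ.le
  have ht2 : t^2 = Real.cos ψ := Real.sq_sqrt hcψ.le
  obtain ⟨ha1, ha2⟩ := hf x'
  obtain ⟨hb1, hb2⟩ := hf x
  set a₁ := (f x').1
  set a₂ := (f x').2
  set b₁ := (f x).1
  set b₂ := (f x).2
  -- rewrite the ratio condition
  have hcross : a₁ * (t * p) = a₂ * (r * q) := by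
    rw [Real.tan_eq_sin_div_cos, Real.tan_eq_sin_div_cos,
      Real.sqrt_div hsψ.le, Real.sqrt_div hsφ.le, ← hr, ← ht, ← hp, ← hq] at hratio
    rw [div_eq_div_iff ha2.ne' (by positivity)] at hratio
    field_simp at hratio
    linarith [hratio]
  -- the key equality w₁ g₁(a) = w₂ g₂(a)
  have hw1 : wOne γ φ = p/t + q/r := rfl
  have hw2 : wTwo γ φ = r/q + t/p := rfl
  have hTa1 : (Tmap γ φ (f x')).1 = t^2 * a₁ + r^2 * a₂ := by
    simp [Tmap, ht2, hr2]; rfl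
  have hTa2 : (Tmap γ φ (f x')).2 = p^2 * a₁ + q^2 * a₂ := by
    simp [Tmap, hp2, hq2]; rfl
  have hTb1 : (Tmap γ φ (f x)).1 = t^2 * b₁ + r^2 * b₂ := by
    simp [Tmap, ht2, hr2]; rfl
  have hTb2 : (Tmap γ φ (f x)).2 = p^2 * b₁ + q^2 * b₂ := by
    simp [Tmap, hp2, hq2]; rfl
  have hkey : wOne γ φ * (Tmap γ φ (f x')).1 = wTwo γ φ * (Tmap γ φ (f x')).2 := by
    rw [hw1, hw2, hTa1, hTa2]
    exact key_alg p q r t a₁ a₂ hp0.ne' hq0.ne' hr0.ne' ht0.ne' hcross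
  have hw1pos : 0 < wOne γ φ := by rw [hw1]; positivity
  have hw2pos : 0 < wTwo γ φ := by rw [hw2]; positivity
  have hmax := hx x'
  rw [hkey, max_self] at hmax
  have h1 : wOne γ φ * (Tmap γ φ (f x)).1 ≤ α * (wTwo γ φ * (Tmap γ φ (f x')).2) :=
    le_trans (le_max_left _ _) hmax
  have h2 : wTwo γ φ * (Tmap γ φ (f x)).2 ≤ α * (wTwo γ φ * (Tmap γ φ (f x')).2) :=
    le_trans (le_max_right _ _) hmax
  rw [← hkey] at h1
  have hg1 : (Tmap γ φ (f x)).1 ≤ α * (Tmap γ φ (f x')).1 :=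
    le_of_mul_le_mul_left (h1.trans_eq (by ring)) hw1pos
  have hg2 : (Tmap γ φ (f x)).2 ≤ α * (Tmap γ φ (f x')).2 :=
    le_of_mul_le_mul_left (h2.trans_eq (by ring)) hw2pos
  rw [hTb1, hTa1] at hg1
  rw [hTb2, hTa2] at hg2
  simp only [leC, coneC, Tmap, Set.mem_setOf_eq, Prod.fst_sub, Prod.snd_sub,
    Prod.smul_fst, Prod.smul_snd, smul_eq_mul]
  rw [show γ - Real.pi/2 - φ = ψ from rfl, show (f x').1 = a₁ from rfl,
    show (f x').2 = a₂ from rfl, show (f x).1 = b₁ from rfl, show (f x).2 = b₂ from rfl]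
  clear_value ψ p q r t a₁ a₂ b₁ b₂
  clear hx hratio hα hγ1 hγ2 hφ1 hφ2 hψ hψ0 hψlt hφlt hpi hcross hw1 hw2 hTa1 hTa2 hTb1 hTb2 hkey hmax h1 h2
  refine ⟨?_, ?_⟩
  · rw [← ht2, ← hr2]; nlinarith [hg1]
  · rw [← hp2, ← hq2]; nlinarith [hg2]
end
end

section
/- Let α ≥ 1, γ ∈ (π/2, π], φ ∈ (0, γ − π/2), and let (X, f) be an instance of a biobjective minimization problem. Set w₁ := √(sin φ)/√(cos φ') + √(cos φ)/√(sin φ') and w₂ := √(sin φ')/√(cos φ) + √(cos φ')/√(sin φ), where φ' = γ − π/2 − φ. If x ∈ X is α-approximate for the weighted max-ordering scalarization of I_γ^φ with weights w₁, w₂, then every x' ∈ X with f₁(x')/f₂(x') = √(tan φ')/√(tan φ) satisfies f₁(x) ≤ β·f₁(x') and f₂(x) ≤ β·f₂(x') for β := α·(1 + √(tan φ)·√(tan φ')). -/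
open Real Set Pointwise

noncomputable section

/-- an `α`-approximate solution `x` for the weighted max-ordering
scalarization of `I_γ^φ` with weights `w₁, w₂` approximates, componentwise with factor
`α · (1 + √(tan φ)·√(tan φ'))`, every `x'` with `f₁(x')/f₂(x') = √(tan φ')/√(tan φ)`. -/
theorem stmt_11 (α γ φ φ' : ℝ) (hα : 1 ≤ α) (hγ : γ ∈ Set.Ioc (Real.pi/2) Real.pi)
    (hφ : φ ∈ Set.Ioo 0 (γ - Real.pi/2)) (hφ' : φ' = γ - Real.pi/2 - φ)
    (X : Type) (hX : Nonempty X) (f : X → ℝ × ℝ)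
    (hf : ∀ x, 0 < (f x).1 ∧ 0 < (f x).2)
    (x : X) (hx : MaxOrdApprox α (wOne γ φ) (wTwo γ φ) γ φ f x)
    (β : ℝ) (hβ : β = α * (1 + Real.sqrt (Real.tan φ) * Real.sqrt (Real.tan φ'))) :
    ∀ x' : X, (f x').1 / (f x').2 = Real.sqrt (Real.tan φ') / Real.sqrt (Real.tan φ) →
      (f x).1 ≤ β * (f x').1 ∧ (f x).2 ≤ β * (f x').2 := by
  obtain ⟨hγ1, hγ2⟩ := hγ
  obtain ⟨hφ0, hφu⟩ := hφ
  have hpi := Real.pi_pos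
  subst hφ'
  have hs : 0 < Real.sin φ := Real.sin_pos_of_pos_of_lt_pi hφ0 (by linarith)
  have hc : 0 < Real.cos φ := Real.cos_pos_of_mem_Ioo ⟨by linarith, by linarith⟩
  have hs' : 0 < Real.sin (γ - Real.pi/2 - φ) :=
    Real.sin_pos_of_pos_of_lt_pi (by linarith) (by linarith)
  have hc' : 0 < Real.cos (γ - Real.pi/2 - φ) :=
    Real.cos_pos_of_mem_Ioo ⟨by linarith, by linarith⟩
  set a := Real.sqrt (Real.sin φ) with ha_def
  set b := Real.sqrt (Real.cos φ) with hb_def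
  set a' := Real.sqrt (Real.sin (γ - Real.pi/2 - φ)) with ha'_def
  set b' := Real.sqrt (Real.cos (γ - Real.pi/2 - φ)) with hb'_def
  have ha : 0 < a := Real.sqrt_pos.2 hs
  have hb : 0 < b := Real.sqrt_pos.2 hc
  have ha' : 0 < a' := Real.sqrt_pos.2 hs'
  have hb' : 0 < b' := Real.sqrt_pos.2 hc'
  have ha2 : a^2 = Real.sin φ := Real.sq_sqrt hs.le
  have hb2 : b^2 = Real.cos φ := Real.sq_sqrt hc.le
  have ha'2 : a'^2 = Real.sin (γ - Real.pi/2 - φ) := Real.sq_sqrt hs'.le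
  have hb'2 : b'^2 = Real.cos (γ - Real.pi/2 - φ) := Real.sq_sqrt hc'.le
  have htb : Real.sqrt (Real.tan φ) = a / b := by
    rw [Real.tan_eq_sin_div_cos, Real.sqrt_div hs.le, ← ha_def, ← hb_def]
  have htb' : Real.sqrt (Real.tan (γ - Real.pi/2 - φ)) = a' / b' := by
    rw [Real.tan_eq_sin_div_cos, Real.sqrt_div hs'.le, ← ha'_def, ← hb'_def]
  clear_value a b a' b'
  have hw1 : wOne γ φ = (a*a' + b*b') / (a'*b') := by
    rw [wOne, ← ha_def, ← hb_def, ← ha'_def, ← hb'_def,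
      div_add_div _ _ hb'.ne' ha'.ne', div_eq_div_iff (by positivity) (by positivity)]
    ring
  have hw2 : wTwo γ φ = (a*a' + b*b') / (a*b) := by
    rw [wTwo, ← ha_def, ← hb_def, ← ha'_def, ← hb'_def,
      div_add_div _ _ hb.ne' ha.ne', div_eq_div_iff (by positivity) (by positivity)]
    ring
  have hT1 : ∀ z : X, (Tmap γ φ (f z)).1 = b'^2 * (f z).1 + a'^2 * (f z).2 := by
    intro z; rw [Tmap, ha'2, hb'2]
  have hT2 : ∀ z : X, (Tmap γ φ (f z)).2 = a^2 * (f z).1 + b^2 * (f z).2 := by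
    intro z; rw [Tmap, ha2, hb2]
  intro x' hratio
  obtain ⟨hp1, hp2⟩ := hf x
  obtain ⟨hq1pos, hq2pos⟩ := hf x'
  rw [htb, htb'] at hratio
  have hrel : (f x').1 * (a * b') = (f x').2 * (a' * b) := by
    field_simp at hratio
    linear_combination hratio
  set t := (f x').2 / (a * b') with ht_def
  have htpos : 0 < t := div_pos hq2pos (mul_pos ha hb')
  have hq2t : (f x').2 = t * (a * b') := by rw [ht_def]; field_simp
  have hq1t : (f x').1 = t * (a' * b) := by
    have h : (f x').1 * (a * b') = (t * (a' * b)) * (a * b') := by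
      rw [hrel, hq2t]; ring
    exact mul_right_cancel₀ (by positivity) h
  clear_value t
  have hmax := hx x'
  rw [hw1, hw2, hT1 x, hT2 x, hT1 x', hT2 x'] at hmax
  have hSpos : 0 < a*a' + b*b' := by positivity
  have hR1 : (a*a'+b*b')/(a'*b') * (b'^2*(f x').1 + a'^2*(f x').2)
      = t*(a*a'+b*b')^2 := by
    rw [hq1t, hq2t, div_mul_eq_mul_div, div_eq_iff (by positivity : (0:ℝ) < a'*b').ne']
    ring
  have hR2 : (a*a'+b*b')/(a*b) * (a^2*(f x').1 + b^2*(f x').2)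
      = t*(a*a'+b*b')^2 := by
    rw [hq1t, hq2t, div_mul_eq_mul_div, div_eq_iff (by positivity : (0:ℝ) < a*b).ne']
    ring
  rw [hR1, hR2, max_self] at hmax
  have h1 : (a*a'+b*b')/(a'*b') * (b'^2*(f x).1 + a'^2*(f x).2) ≤ α*(t*(a*a'+b*b')^2) :=
    le_trans (le_max_left _ _) hmax
  have h2 : (a*a'+b*b')/(a*b) * (a^2*(f x).1 + b^2*(f x).2) ≤ α*(t*(a*a'+b*b')^2) :=
    le_trans (le_max_right _ _) hmax
  rw [div_mul_eq_mul_div, div_le_iff₀ (by positivity)] at h1 h2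
  have h1' : b'^2 * (f x).1 ≤ α*t*(a*a'+b*b')*(a'*b') := by
    have step : (a*a'+b*b') * (b'^2*(f x).1) ≤ (a*a'+b*b') * (α*t*(a*a'+b*b')*(a'*b')) := by
      calc (a*a'+b*b') * (b'^2*(f x).1)
          ≤ (a*a'+b*b') * (b'^2*(f x).1 + a'^2*(f x).2) :=
            mul_le_mul_of_nonneg_left (le_add_of_nonneg_right (by positivity)) hSpos.le
        _ ≤ α*(t*(a*a'+b*b')^2)*(a'*b') := h1
        _ = (a*a'+b*b') * (α*t*(a*a'+b*b')*(a'*b')) := by ring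
    exact le_of_mul_le_mul_left step hSpos
  have h2' : b^2 * (f x).2 ≤ α*t*(a*a'+b*b')*(a*b) := by
    have step : (a*a'+b*b') * (b^2*(f x).2) ≤ (a*a'+b*b') * (α*t*(a*a'+b*b')*(a*b)) := by
      calc (a*a'+b*b') * (b^2*(f x).2)
          ≤ (a*a'+b*b') * (a^2*(f x).1 + b^2*(f x).2) :=
            mul_le_mul_of_nonneg_left (le_add_of_nonneg_left (by positivity)) hSpos.le
        _ ≤ α*(t*(a*a'+b*b')^2)*(a*b) := h2
        _ = (a*a'+b*b') * (α*t*(a*a'+b*b')*(a*b)) := by ring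
    exact le_of_mul_le_mul_left step hSpos
  constructor
  · have heq : β * (f x').1 = α*t*(a*a'+b*b')*a'/b' := by
      rw [hβ, htb, htb', hq1t]; field_simp; ring
    rw [heq, le_div_iff₀ hb']
    have step : b' * ((f x).1 * b') ≤ b' * (α*t*(a*a'+b*b')*a') := by
      calc b' * ((f x).1 * b') = b'^2 * (f x).1 := by ring
        _ ≤ α*t*(a*a'+b*b')*(a'*b') := h1'
        _ = b' * (α*t*(a*a'+b*b')*a') := by ring
    exact le_of_mul_le_mul_left step hb'
  · have heq : β * (f x').2 = α*t*(a*a'+b*b')*a/b := by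
      rw [hβ, htb, htb', hq2t]; field_simp; ring
    rw [heq, le_div_iff₀ hb]
    have step : b * ((f x).2 * b) ≤ b * (α*t*(a*a'+b*b')*a) := by
      calc b * ((f x).2 * b) = b^2 * (f x).2 := by ring
        _ ≤ α*t*(a*a'+b*b')*(a*b) := h2'
        _ = b * (α*t*(a*a'+b*b')*a) := by ring
    exact le_of_mul_le_mul_left step hb
end
end

section
/- Let γ ∈ (π/2, π] and φ ∈ (0, γ − π/2), and set φ' := γ − π/2 − φ and s := (1/2)·(√(tan φ)/√(tan φ') + √(tan φ')/√(tan φ)). Then √(tan φ)·√(tan φ') = √(1 + s²·(tan γ)²) + s·tan γ. -/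
open Real Set Pointwise

noncomputable section

/-- with `s = (1/2)·(√(tan φ)/√(tan φ') + √(tan φ')/√(tan φ))`, one has
`√(tan φ)·√(tan φ') = √(1 + s²·(tan γ)²) + s·tan γ`. -/
theorem stmt_13 (γ φ φ' s : ℝ) (hγ : γ ∈ Set.Ioc (Real.pi/2) Real.pi)
    (hφ : φ ∈ Set.Ioo 0 (γ - Real.pi/2)) (hφ' : φ' = γ - Real.pi/2 - φ)
    (hs : s = (1/2) * (Real.sqrt (Real.tan φ) / Real.sqrt (Real.tan φ') +
      Real.sqrt (Real.tan φ') / Real.sqrt (Real.tan φ))) :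
    Real.sqrt (Real.tan φ) * Real.sqrt (Real.tan φ') =
      Real.sqrt (1 + s^2 * (Real.tan γ)^2) + s * Real.tan γ := by
  obtain ⟨hγ1, hγ2⟩ := hγ
  obtain ⟨hφ1, hφ2⟩ := hφ
  have hpi := Real.pi_pos
  have hφlt : φ < Real.pi/2 := by linarith
  have hφ'1 : 0 < φ' := by rw [hφ']; linarith
  have hφ'2 : φ' < Real.pi/2 := by rw [hφ']; linarith
  have hcφ : 0 < Real.cos φ := Real.cos_pos_of_mem_Ioo ⟨by linarith, hφlt⟩
  have hcφ' : 0 < Real.cos φ' := Real.cos_pos_of_mem_Ioo ⟨by linarith, hφ'2⟩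
  have hsφ : 0 < Real.sin φ := Real.sin_pos_of_pos_of_lt_pi hφ1 (by linarith)
  have hsφ' : 0 < Real.sin φ' := Real.sin_pos_of_pos_of_lt_pi hφ'1 (by linarith)
  have htφ : 0 < Real.tan φ := Real.tan_pos_of_pos_of_lt_pi_div_two hφ1 hφlt
  have htφ' : 0 < Real.tan φ' := Real.tan_pos_of_pos_of_lt_pi_div_two hφ'1 hφ'2
  have hssum : 0 < Real.sin (φ + φ') :=
    Real.sin_pos_of_pos_of_lt_pi (by linarith) (by linarith)
  set a := Real.sqrt (Real.tan φ) with ha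
  set b := Real.sqrt (Real.tan φ') with hb
  have ha0 : 0 < a := Real.sqrt_pos.mpr htφ
  have hb0 : 0 < b := Real.sqrt_pos.mpr htφ'
  have ha2 : a ^ 2 = Real.tan φ := Real.sq_sqrt htφ.le
  have hb2 : b ^ 2 = Real.tan φ' := Real.sq_sqrt htφ'.le
  have htanγ : Real.tan γ = (a^2 * b^2 - 1) / (a^2 + b^2) := by
    have hγeq : γ = (φ + φ') + Real.pi/2 := by rw [hφ']; ring
    have h1 : Real.tan γ = -Real.cos (φ + φ') / Real.sin (φ + φ') := by
      rw [hγeq, Real.tan_eq_sin_div_cos, Real.sin_add_pi_div_two,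
        Real.cos_add_pi_div_two, div_neg, neg_div]
    rw [h1, ha2, hb2, Real.tan_eq_sin_div_cos, Real.tan_eq_sin_div_cos,
      Real.cos_add, Real.sin_add]
    have hne : Real.sin φ * Real.cos φ' + Real.cos φ * Real.sin φ' ≠ 0 := by
      rw [← Real.sin_add]; exact hssum.ne'
    field_simp
    ring
  have hseq : s = (a^2 + b^2) / (2 * a * b) := by
    rw [hs]; field_simp
  have hab : (0:ℝ) < a^2 + b^2 := by positivity
  have key : 1 + s^2 * (Real.tan γ)^2 = ((1 + a^2 * b^2) / (2 * a * b))^2 := by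
    rw [htanγ, hseq]
    field_simp
    ring
  have hsqrt : Real.sqrt (1 + s^2 * (Real.tan γ)^2) = (1 + a^2 * b^2) / (2 * a * b) := by
    rw [key, Real.sqrt_sq (by positivity)]
  rw [hsqrt, hseq, htanγ]
  field_simp
  ring
end
end

section
/- Let (X, f) be an instance of a biobjective minimization problem, let α ≥ 1, and let γ ∈ (π/2, π]. Let X_Q ⊆ X be a set of solutions that, for every φ ∈ (0, γ − π/2), contains an α-approximate solution for the weighted max-ordering scalarization of I_γ^φ with weights w₁ = √(sin φ)/√(cos φ') + √(cos φ)/√(sin φ') and w₂ = √(sin φ')/√(cos φ) + √(cos φ')/√(sin φ), where φ' = γ − π/2 − φ. Then X_Q is an (α·(1 + tan(γ/2 − π/4)))-approximation with respect to the componentwise order ≤. -/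
open Real Set Pointwise

noncomputable section

private lemma aux_sqrt_le {x y : ℝ} (hx : 0 ≤ x) (hy : 0 ≤ y) (h : x^2 ≤ y^2) : x ≤ y := by
  nlinarith [h, hx, hy]

set_option maxHeartbeats 2000000 in
/-- a set containing, for every `φ ∈ (0, γ - π/2)`, an `α`-approximate
solution for the weighted max-ordering scalarization of `I_γ^φ` with weights `w₁, w₂`
is an `(α · (1 + tan(γ/2 - π/4)))`-approximation. -/
theorem stmt_14 (X : Type) (hX : Nonempty X) (f : X → ℝ × ℝ)
    (hf : ∀ x, 0 < (f x).1 ∧ 0 < (f x).2)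
    (α γ : ℝ) (hα : 1 ≤ α) (hγ : γ ∈ Set.Ioc (Real.pi/2) Real.pi)
    (Q : Set X)
    (hQ : ∀ φ ∈ Set.Ioo 0 (γ - Real.pi/2),
      ∃ x ∈ Q, MaxOrdApprox α (wOne γ φ) (wTwo γ φ) γ φ f x) :
    IsApprox (α * (1 + Real.tan (γ/2 - Real.pi/4))) f Q := by
  obtain ⟨hγ1, hγ2⟩ := hγ
  have hπ := Real.pi_pos
  intro x
  have ha : 0 < (f x).1 := (hf x).1
  have hb : 0 < (f x).2 := (hf x).2
  set a := (f x).1 with hadef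
  set b := (f x).2 with hbdef
  set δ := γ - Real.pi/2 with hδdef
  have hδ0 : 0 < δ := by rw [hδdef]; linarith
  have hδle : δ ≤ Real.pi/2 := by rw [hδdef]; linarith
  clear_value δ
  clear_value a b
  -- IVT to find the balancing angle φ
  set F : ℝ → ℝ := fun ψ => a^2 * (Real.sin ψ * Real.cos (δ - ψ))
      - b^2 * (Real.cos ψ * Real.sin (δ - ψ)) with hFdef
  have hcont : Continuous F := by rw [hFdef]; fun_prop
  have hδπ : δ < Real.pi := by rw [hδdef]; linarith
  have hsinδ : 0 < Real.sin δ := Real.sin_pos_of_pos_of_lt_pi hδ0 hδπ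
  have hF0 : F 0 < 0 := by
    have : F 0 = -(b^2 * Real.sin δ) := by simp [hFdef]
    rw [this]
    nlinarith [mul_pos (mul_pos hb hb) hsinδ]
  have hFδ : 0 < F δ := by
    have : F δ = a^2 * Real.sin δ := by simp [hFdef]
    rw [this]
    nlinarith [mul_pos (mul_pos ha ha) hsinδ]
  clear_value F
  obtain ⟨φ, hφmem, hφeq⟩ := intermediate_value_Ioo hδ0.le hcont.continuousOn
    (Set.mem_Ioo.mpr ⟨hF0, hFδ⟩)
  obtain ⟨hφ0, hφδ⟩ := hφmem
  set φ' := δ - φ with hφ'def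
  clear_value φ'
  have hφ'0 : 0 < φ' := by rw [hφ'def]; linarith
  have hφπ : φ < Real.pi/2 := lt_of_lt_of_le hφδ hδle
  have hφ'π : φ' < Real.pi/2 := by rw [hφ'def]; linarith
  have hs : 0 < Real.sin φ := Real.sin_pos_of_pos_of_lt_pi hφ0 (by linarith)
  have hc : 0 < Real.cos φ := Real.cos_pos_of_mem_Ioo ⟨by linarith, hφπ⟩
  have hs' : 0 < Real.sin φ' := Real.sin_pos_of_pos_of_lt_pi hφ'0 (by linarith)
  have hc' : 0 < Real.cos φ' := Real.cos_pos_of_mem_Ioo ⟨by linarith, hφ'π⟩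
  have hbal : a^2 * (Real.sin φ * Real.cos φ') = b^2 * (Real.cos φ * Real.sin φ') := by
    have : F φ = 0 := hφeq
    rw [hFdef] at this
    simp only [← hφ'def] at this
    linarith
  -- square-root variables
  set S := Real.sqrt (Real.sin φ) with hSdef
  set C := Real.sqrt (Real.cos φ) with hCdef
  set S' := Real.sqrt (Real.sin φ') with hS'def
  set C' := Real.sqrt (Real.cos φ') with hC'def
  have hS2 : S^2 = Real.sin φ := by rw [hSdef]; exact Real.sq_sqrt hs.le
  have hC2 : C^2 = Real.cos φ := by rw [hCdef]; exact Real.sq_sqrt hc.le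
  have hS'2 : S'^2 = Real.sin φ' := by rw [hS'def]; exact Real.sq_sqrt hs'.le
  have hC'2 : C'^2 = Real.cos φ' := by rw [hC'def]; exact Real.sq_sqrt hc'.le
  have hSpos : 0 < S := by rw [hSdef]; exact Real.sqrt_pos.mpr hs
  have hCpos : 0 < C := by rw [hCdef]; exact Real.sqrt_pos.mpr hc
  have hS'pos : 0 < S' := by rw [hS'def]; exact Real.sqrt_pos.mpr hs'
  have hC'pos : 0 < C' := by rw [hC'def]; exact Real.sqrt_pos.mpr hc'
  clear_value S C S' C'
  -- balance at square-root level
  have hbalS : a * (S * C') = b * (C * S') := by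
    have h1 : (a * (S * C'))^2 = (b * (C * S'))^2 := by
      have : a^2 * (S^2 * C'^2) = b^2 * (C^2 * S'^2) := by
        rw [hS2, hC2, hS'2, hC'2]; exact hbal
      linear_combination this
    have hp : 0 ≤ a * (S * C') := by positivity
    have hq : 0 ≤ b * (C * S') := by positivity
    calc a * (S * C') = Real.sqrt ((a * (S * C'))^2) := (Real.sqrt_sq hp).symm
      _ = Real.sqrt ((b * (C * S'))^2) := by rw [h1]
      _ = b * (C * S') := Real.sqrt_sq hq
  -- the tangent bound
  set T := Real.tan (γ/2 - Real.pi/4) with hTdef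
  clear_value T
  have hTδ : γ/2 - Real.pi/4 = δ/2 := by rw [hδdef]; ring
  have hcoshalf : 0 < Real.cos (δ/2) :=
    Real.cos_pos_of_mem_Ioo ⟨by linarith, by linarith⟩
  have hTpos : 0 < T := by
    rw [hTdef, hTδ]
    exact Real.tan_pos_of_pos_of_lt_pi_div_two (by linarith) (by linarith)
  have hT2 : T^2 * (1 + Real.cos δ) = 1 - Real.cos δ := by
    have hcos2 : Real.cos δ = 2 * Real.cos (δ/2)^2 - 1 := by
      have h := Real.cos_two_mul (δ/2)
      rw [show 2 * (δ/2) = δ by ring] at h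
      exact h
    have hsin2 : Real.sin (δ/2)^2 = 1 - Real.cos (δ/2)^2 := Real.sin_sq (δ/2)
    rw [hTdef, hTδ, Real.tan_eq_sin_div_cos, div_pow, div_mul_eq_mul_div,
      div_eq_iff (pow_ne_zero 2 hcoshalf.ne')]
    linear_combination (1 + Real.cos δ) * hsin2 + hcos2
  have hcosδ : Real.cos δ = Real.cos φ * Real.cos φ' - Real.sin φ * Real.sin φ' := by
    have : δ = φ + φ' := by rw [hφ'def]; ring
    rw [this, Real.cos_add]
  have hcosδ0 : 0 ≤ Real.cos δ := Real.cos_nonneg_of_mem_Icc ⟨by linarith, hδle⟩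
  have hcossub : Real.cos φ * Real.cos φ' + Real.sin φ * Real.sin φ' ≤ 1 := by
    rw [← Real.cos_sub]; exact Real.cos_le_one _
  have hqp : 0 ≤ Real.cos φ * Real.cos φ' - Real.sin φ * Real.sin φ' := by
    rw [← hcosδ]; exact hcosδ0
  have hT2' : T^2 * (1 + (Real.cos φ * Real.cos φ' - Real.sin φ * Real.sin φ')) =
      1 - (Real.cos φ * Real.cos φ' - Real.sin φ * Real.sin φ') := by
    rw [← hcosδ]; exact hT2
  have hkey2 : Real.sin φ * Real.sin φ' ≤ T^2 * (Real.cos φ * Real.cos φ') := by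
    have hX : 0 < 1 + (Real.cos φ * Real.cos φ' - Real.sin φ * Real.sin φ') := by linarith
    have hT2q : T^2 * (1 + (Real.cos φ * Real.cos φ' - Real.sin φ * Real.sin φ')) *
        (Real.cos φ * Real.cos φ') =
        (1 - (Real.cos φ * Real.cos φ' - Real.sin φ * Real.sin φ')) *
        (Real.cos φ * Real.cos φ') := by
      rw [hT2']
    have hprod : 0 ≤ (Real.cos φ * Real.cos φ' - Real.sin φ * Real.sin φ') *
        (1 - (Real.cos φ * Real.cos φ' + Real.sin φ * Real.sin φ')) :=
      mul_nonneg hqp (by linarith)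
    have step : (Real.sin φ * Real.sin φ') *
        (1 + (Real.cos φ * Real.cos φ' - Real.sin φ * Real.sin φ')) ≤
        (T^2 * (Real.cos φ * Real.cos φ')) *
        (1 + (Real.cos φ * Real.cos φ' - Real.sin φ * Real.sin φ')) := by
      linarith [hT2q, hprod]
    exact le_of_mul_le_mul_right step hX
  have hkey : S * S' ≤ T * (C * C') := by
    have hsq : (S * S')^2 ≤ (T * (C * C'))^2 := by
      have e1 : (S * S')^2 = Real.sin φ * Real.sin φ' := by
        rw [mul_pow, hS2, hS'2]
      have e2 : (T * (C * C'))^2 = T^2 * (Real.cos φ * Real.cos φ') := by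
        rw [mul_pow, mul_pow, hC2, hC'2]
      rw [e1, e2]; exact hkey2
    exact aux_sqrt_le (by positivity) (by positivity) hsq
  -- weights
  set N := S * S' + C * C' with hNdef
  have hNpos : 0 < N := by rw [hNdef]; positivity
  clear_value N
  have hw1 : wOne γ φ = N / (C' * S') := by
    rw [wOne]
    rw [show γ - Real.pi/2 - φ = φ' by rw [hφ'def, hδdef]]
    rw [← hSdef, ← hCdef, ← hS'def, ← hC'def, hNdef]
    field_simp
  have hw2 : wTwo γ φ = N / (C * S) := by
    rw [wTwo]
    rw [show γ - Real.pi/2 - φ = φ' by rw [hφ'def, hδdef]]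
    rw [← hSdef, ← hCdef, ← hS'def, ← hC'def, hNdef]
    field_simp
    try ring
  have hw1pos : 0 < wOne γ φ := by rw [hw1]; positivity
  have hw2pos : 0 < wTwo γ φ := by rw [hw2]; positivity
  -- scalar inequalities
  have f1 : S'^2 * b ≤ T * (C'^2 * a) := by
    have hb3 : S' * (a * (S * C')) = S' * (b * (C * S')) := by rw [hbalS]
    have h2 : (a * C') * (S * S') ≤ (a * C') * (T * (C * C')) :=
      mul_le_mul_of_nonneg_left hkey (by positivity)
    have hC2' : C * (S'^2 * b) ≤ C * (T * (C'^2 * a)) := by linarith [hb3, h2]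
    exact le_of_mul_le_mul_left hC2' hCpos
  have f4 : S^2 * a ≤ T * (C^2 * b) := by
    have hb3 : S * (a * (S * C')) = S * (b * (C * S')) := by rw [hbalS]
    have h2 : (b * C) * (S * S') ≤ (b * C) * (T * (C * C')) :=
      mul_le_mul_of_nonneg_left hkey (by positivity)
    have hC2' : C' * (S^2 * a) ≤ C' * (T * (C^2 * b)) := by linarith [hb3, h2]
    exact le_of_mul_le_mul_left hC2' hC'pos
  -- get the approximate solution
  obtain ⟨x', hx'Q, hx'⟩ := hQ φ ⟨hφ0, hφδ⟩
  have hang : γ - Real.pi/2 - φ = φ' := by rw [hφ'def, hδdef]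
  have htx1 : (Tmap γ φ (f x)).1 = C'^2 * a + S'^2 * b := by
    simp only [Tmap, hang, ← hC'2, ← hS'2]
    rw [← hadef, ← hbdef]
  have htx2 : (Tmap γ φ (f x)).2 = S^2 * a + C^2 * b := by
    simp only [Tmap, hang, ← hS2, ← hC2]
    rw [← hadef, ← hbdef]
  have htx'1 : (Tmap γ φ (f x')).1 = Real.cos φ' * (f x').1 + Real.sin φ' * (f x').2 := by
    simp only [Tmap, hang]
  have htx'2 : (Tmap γ φ (f x')).2 = Real.sin φ * (f x').1 + Real.cos φ * (f x').2 := by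
    simp only [Tmap, hang]
  -- the two weighted objectives at x are equal
  have E1 : wOne γ φ * (C'^2 * a + S'^2 * b) = wTwo γ φ * (S^2 * a + C^2 * b) := by
    rw [hw1, hw2]
    rw [div_mul_eq_mul_div, div_mul_eq_mul_div, div_eq_div_iff (by positivity) (by positivity)]
    linear_combination (N * (C * C' - S * S')) * hbalS
  have happrox := hx' x
  have hmaxeq : max (wOne γ φ * (Tmap γ φ (f x)).1) (wTwo γ φ * (Tmap γ φ (f x)).2)
      = wOne γ φ * (C'^2 * a + S'^2 * b) := by
    rw [htx1, htx2, ← E1, max_self]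
  -- bound the max at x by both component targets
  have bound1 : wOne γ φ * (C'^2 * a + S'^2 * b) ≤ (1 + T) * (wOne γ φ * (C'^2 * a)) := by
    have h := mul_le_mul_of_nonneg_left f1 hw1pos.le
    have e : wOne γ φ * (C'^2 * a + S'^2 * b) =
        wOne γ φ * (C'^2 * a) + wOne γ φ * (S'^2 * b) := by ring
    have e2 : (1 + T) * (wOne γ φ * (C'^2 * a)) =
        wOne γ φ * (C'^2 * a) + wOne γ φ * (T * (C'^2 * a)) := by ring
    linarith [h]
  have bound2 : wOne γ φ * (C'^2 * a + S'^2 * b) ≤ (1 + T) * (wTwo γ φ * (C^2 * b)) := by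
    rw [E1]
    have h := mul_le_mul_of_nonneg_left f4 hw2pos.le
    have e : wTwo γ φ * (S^2 * a + C^2 * b) =
        wTwo γ φ * (S^2 * a) + wTwo γ φ * (C^2 * b) := by ring
    have e2 : (1 + T) * (wTwo γ φ * (C^2 * b)) =
        wTwo γ φ * (C^2 * b) + wTwo γ φ * (T * (C^2 * b)) := by ring
    linarith [h]
  have hαpos : 0 < α := lt_of_lt_of_le one_pos hα
  refine ⟨x', hx'Q, ?_, ?_⟩
  · -- first component
    have c1 : wOne γ φ * (Real.cos φ' * (f x').1) ≤ wOne γ φ * (Tmap γ φ (f x')).1 := by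
      rw [htx'1]
      have h0 : 0 ≤ Real.sin φ' * (f x').2 := mul_nonneg hs'.le (hf x').2.le
      have := mul_le_mul_of_nonneg_left (le_add_of_nonneg_right h0 :
        Real.cos φ' * (f x').1 ≤ Real.cos φ' * (f x').1 + Real.sin φ' * (f x').2) hw1pos.le
      linarith [this]
    have c2 : wOne γ φ * (Tmap γ φ (f x')).1
        ≤ max (wOne γ φ * (Tmap γ φ (f x')).1) (wTwo γ φ * (Tmap γ φ (f x')).2) :=
      le_max_left _ _
    have c3 : wOne γ φ * (Real.cos φ' * (f x').1)
        ≤ α * ((1 + T) * (wOne γ φ * (C'^2 * a))) := by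
      calc wOne γ φ * (Real.cos φ' * (f x').1)
          ≤ max (wOne γ φ * (Tmap γ φ (f x')).1) (wTwo γ φ * (Tmap γ φ (f x')).2) :=
            le_trans c1 c2
        _ ≤ α * max (wOne γ φ * (Tmap γ φ (f x)).1) (wTwo γ φ * (Tmap γ φ (f x)).2) := happrox
        _ ≤ α * ((1 + T) * (wOne γ φ * (C'^2 * a))) := by
            rw [hmaxeq]
            exact mul_le_mul_of_nonneg_left bound1 hαpos.le
    have hpos : 0 < wOne γ φ * Real.cos φ' := by positivity
    have c4 : (wOne γ φ * Real.cos φ') * (f x').1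
        ≤ (wOne γ φ * Real.cos φ') * (α * (1 + T) * a) := by
      rw [← hC'2] at c3
      have e : wOne γ φ * C'^2 * (α * (1 + T) * a) = α * ((1 + T) * (wOne γ φ * (C'^2 * a))) := by
        ring
      rw [← hC'2]
      linarith [c3, e.le, e.ge]
    have := le_of_mul_le_mul_left c4 hpos
    linarith [this]
  · -- second component
    have c1 : wTwo γ φ * (Real.cos φ * (f x').2) ≤ wTwo γ φ * (Tmap γ φ (f x')).2 := by
      rw [htx'2]
      have h0 : 0 ≤ Real.sin φ * (f x').1 := mul_nonneg hs.le (hf x').1.le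
      have := mul_le_mul_of_nonneg_left (le_add_of_nonneg_left h0 :
        Real.cos φ * (f x').2 ≤ Real.sin φ * (f x').1 + Real.cos φ * (f x').2) hw2pos.le
      linarith [this]
    have c2 : wTwo γ φ * (Tmap γ φ (f x')).2
        ≤ max (wOne γ φ * (Tmap γ φ (f x')).1) (wTwo γ φ * (Tmap γ φ (f x')).2) :=
      le_max_right _ _
    have c3 : wTwo γ φ * (Real.cos φ * (f x').2)
        ≤ α * ((1 + T) * (wTwo γ φ * (C^2 * b))) := by
      calc wTwo γ φ * (Real.cos φ * (f x').2)
          ≤ max (wOne γ φ * (Tmap γ φ (f x')).1) (wTwo γ φ * (Tmap γ φ (f x')).2) :=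
            le_trans c1 c2
        _ ≤ α * max (wOne γ φ * (Tmap γ φ (f x)).1) (wTwo γ φ * (Tmap γ φ (f x)).2) := happrox
        _ ≤ α * ((1 + T) * (wTwo γ φ * (C^2 * b))) := by
            rw [hmaxeq]
            exact mul_le_mul_of_nonneg_left bound2 hαpos.le
    have hpos : 0 < wTwo γ φ * Real.cos φ := by positivity
    have c4 : (wTwo γ φ * Real.cos φ) * (f x').2
        ≤ (wTwo γ φ * Real.cos φ) * (α * (1 + T) * b) := by
      rw [← hC2] at c3
      have e : wTwo γ φ * C^2 * (α * (1 + T) * b) = α * ((1 + T) * (wTwo γ φ * (C^2 * b))) := by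
        ring
      rw [← hC2]
      linarith [c3, e.le, e.ge]
    have := le_of_mul_le_mul_left c4 hpos
    linarith [this]
end
end

section
/- Let (X, f) be an instance of a biobjective minimization problem such that f(X) + ℝ²_≥ is closed, and let γ ∈ [π/2, π]. Then the set of γ-supported solutions is a (1 + tan(γ/2 − π/4))-approximation with respect to the componentwise order ≤. -/
open Real Set Pointwise

noncomputable section
set_option maxHeartbeats 1000000

lemma memQ_iff (R : Set (ℝ × ℝ)) (y : ℝ × ℝ) :
    y ∈ R + {y : ℝ × ℝ | 0 ≤ y.1 ∧ 0 ≤ y.2} ↔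
      ∃ u ∈ R, u.1 ≤ y.1 ∧ u.2 ≤ y.2 := by
  rw [Set.mem_add]
  constructor
  · rintro ⟨u, hu, v, hv, rfl⟩
    exact ⟨u, hu, le_add_of_nonneg_right hv.1, le_add_of_nonneg_right hv.2⟩
  · rintro ⟨u, hu, h1, h2⟩
    exact ⟨u, hu, y - u, ⟨by simpa using h1, by simpa using h2⟩, by abel⟩

lemma compact_of_bounds {S : Set (ℝ × ℝ)} (hS : IsClosed S) {lo hi : ℝ × ℝ}
    (h : S ⊆ Set.Icc lo hi) : IsCompact S :=
  IsCompact.of_isClosed_subset isCompact_Icc hS h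

lemma notCountable_Ioo {a b : ℝ} (h : a < b) : ¬ (Set.Ioo a b).Countable := by
  intro hc
  rw [← Cardinal.le_aleph0_iff_set_countable, Cardinal.mk_Ioo_real h] at hc
  exact Cardinal.aleph0_lt_continuum.not_ge hc

/-- Key lemma for the case `γ = π`. -/

lemma key_pi (R : Set (ℝ × ℝ)) (hR : ∀ y ∈ R, 0 < y.1 ∧ 0 < y.2)
    (hclosed : IsClosed (R + {y : ℝ × ℝ | 0 ≤ y.1 ∧ 0 ≤ y.2}))
    (a b : ℝ) (ha : 0 < a) (hb : 0 < b) (hv : (a, b) ∈ R) :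
    ∃ z ∈ R, z.1 ≤ 2*a ∧ z.2 ≤ 2*b ∧ ∃ ε, 0 < ε ∧
      ∀ y ∈ R, 0 ≤ (b+ε) * (z.1 - y.1) + a * (z.2 - y.2) → y = z := by
  set A := R + {y : ℝ × ℝ | 0 ≤ y.1 ∧ 0 ≤ y.2} with hA
  have hApos : ∀ y ∈ A, 0 < y.1 ∧ 0 < y.2 := by
    intro y hy
    obtain ⟨u, hu, h1, h2⟩ := (memQ_iff R y).mp hy
    exact ⟨lt_of_lt_of_le (hR u hu).1 h1, lt_of_lt_of_le (hR u hu).2 h2⟩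
  have hRA : R ⊆ A := fun u hu => (memQ_iff R u).mpr ⟨u, hu, le_refl _, le_refl _⟩
  set M : ℝ → Set (ℝ × ℝ) := fun ε =>
    {z : ℝ × ℝ | z ∈ A ∧ ∀ y ∈ A, (b+ε) * z.1 + a * z.2 ≤ (b+ε) * y.1 + a * y.2} with hM
  -- existence of minimizers in R
  have hminex : ∀ ε, 0 < ε → ∃ z ∈ R, z ∈ M ε ∧
      (b+ε) * z.1 + a * z.2 ≤ (b+ε) * a + a * b := by
    intro ε hε
    have hbε : 0 < b + ε := by linarith
    set K := {y : ℝ × ℝ | y ∈ A ∧ (b+ε) * y.1 + a * y.2 ≤ (b+ε) * a + a * b} with hK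
    have hKclosed : IsClosed K := by
      rw [hK, Set.setOf_and]
      exact IsClosed.inter (by simpa using hclosed) (isClosed_le (by fun_prop) (by fun_prop))
    have hKsub : K ⊆ Set.Icc ((0:ℝ), (0:ℝ))
        (((b+ε) * a + a * b)/(b+ε), ((b+ε) * a + a * b)/a) := by
      rintro y ⟨hyA, h1⟩
      obtain ⟨p1, p2⟩ := hApos y hyA
      refine ⟨⟨p1.le, p2.le⟩, ⟨?_, ?_⟩⟩
      · rw [le_div_iff₀ hbε]; nlinarith
      · rw [le_div_iff₀ ha]; nlinarith
    have hKcompact := compact_of_bounds hKclosed hKsub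
    have hvK : (a, b) ∈ K := ⟨hRA hv, le_refl _⟩
    obtain ⟨y₀, hy₀K, hy₀min⟩ := hKcompact.exists_isMinOn ⟨(a, b), hvK⟩
      (Continuous.continuousOn (by fun_prop) :
        ContinuousOn (fun y : ℝ × ℝ => (b+ε) * y.1 + a * y.2) _)
    rw [isMinOn_iff] at hy₀min
    obtain ⟨z, hzR, hz1, hz2⟩ := (memQ_iff R y₀).mp hy₀K.1
    have hgz : (b+ε) * z.1 + a * z.2 ≤ (b+ε) * y₀.1 + a * y₀.2 := by
      nlinarith [mul_le_mul_of_nonneg_left hz1 hbε.le, mul_le_mul_of_nonneg_left hz2 ha.le]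
    have hmin : ∀ y ∈ A, (b+ε) * z.1 + a * z.2 ≤ (b+ε) * y.1 + a * y.2 := by
      intro y hyA
      rcases le_or_gt ((b+ε) * y.1 + a * y.2) ((b+ε) * a + a * b) with h | h
      · exact le_trans hgz (hy₀min y ⟨hyA, h⟩)
      · exact le_trans (le_trans hgz (hy₀min (a, b) hvK)) h.le
    exact ⟨z, hzR, ⟨hRA hzR, hmin⟩, le_trans hgz (hy₀min (a, b) hvK)⟩
  -- monotonicity of minimizers
  have hmono : ∀ ε ε', ε < ε' → ∀ u ∈ M ε, ∀ w ∈ M ε', w.1 ≤ u.1 := by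
    intro ε ε' hlt u hu w hw
    have h1 := hu.2 w (hw.1)
    have h2 := hw.2 u (hu.1)
    by_contra hcon
    push_neg at hcon
    nlinarith [mul_pos (sub_pos.2 hlt) (sub_pos.2 hcon)]
  -- distinct minimizers have distinct first coordinates
  have hdist : ∀ ε, ∀ u ∈ M ε, ∀ w ∈ M ε, u ≠ w → u.1 ≠ w.1 := by
    intro ε u hu w hw hne heq1
    have h1 := hu.2 w hw.1
    have h2 := hw.2 u hu.1
    apply hne
    apply Prod.ext heq1
    have : a * u.2 = a * w.2 := by rw [heq1] at h1 h2; linarith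
    exact mul_left_cancel₀ ha.ne' this
  -- the set of bad parameters is countable
  set D := {ε : ℝ | 0 < ε ∧ ∃ u ∈ M ε, ∃ w ∈ M ε, u ≠ w} with hD
  have hDcount : D.Countable := by
    have hsel : ∀ ε : D, ∃ q : ℚ,
        (∃ u ∈ M ε.1, (q:ℝ) < u.1) ∧ (∃ w ∈ M ε.1, w.1 < (q:ℝ)) := by
      rintro ⟨ε, hε, u, hu, w, hw, hne⟩
      rcases lt_trichotomy u.1 w.1 with h | h | h
      · obtain ⟨q, hq1, hq2⟩ := exists_rat_btwn h
        exact ⟨q, ⟨w, hw, hq2⟩, ⟨u, hu, hq1⟩⟩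
      · exact absurd h (hdist ε u hu w hw hne)
      · obtain ⟨q, hq1, hq2⟩ := exists_rat_btwn h
        exact ⟨q, ⟨u, hu, hq2⟩, ⟨w, hw, hq1⟩⟩
    choose F hF1 hF2 using hsel
    have key : ∀ (ε1 ε2 : D), ε1.1 < ε2.1 → ((F ε2 : ℝ) < (F ε1 : ℝ)) := by
      intro ε1 ε2 h
      obtain ⟨w', hw', hw'1⟩ := hF2 ε1
      obtain ⟨u', hu', hu'1⟩ := hF1 ε2
      have hm := hmono ε1.1 ε2.1 h w' hw' u' hu'
      exact lt_trans (lt_of_lt_of_le hu'1 hm) hw'1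
    have hinj : Function.Injective F := by
      intro ε1 ε2 heq
      by_contra hne
      have hne' : ε1.1 ≠ ε2.1 := fun h => hne (Subtype.ext h)
      rcases lt_or_gt_of_ne hne' with h | h
      · have := key ε1 ε2 h
        rw [heq] at this
        exact lt_irrefl _ this
      · have := key ε2 ε1 h
        rw [heq] at this
        exact lt_irrefl _ this
    have : Countable D := hinj.countable
    exact Set.countable_coe_iff.mp this
  have hgood : ∀ δ, 0 < δ → ∃ ε, 0 < ε ∧ ε < δ ∧ ε ∉ D := by
    intro δ hδ
    by_contra hcon
    push_neg at hcon
    have hsub : Set.Ioo (0:ℝ) δ ⊆ D := by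
      rintro ε ⟨h1, h2⟩
      exact hcon ε h1 h2
    exact notCountable_Ioo hδ (hDcount.mono hsub)
  -- the exceptional compact set E
  set E := {y : ℝ × ℝ | y ∈ A ∧ 2*b ≤ y.2 ∧ b * y.1 + a * y.2 ≤ 2*a*b + a} with hE
  obtain ⟨δ, hδ0, hδ1, hδE⟩ : ∃ δ, 0 < δ ∧ δ ≤ 1 ∧ ∀ y ∈ E, δ * a ≤ b * y.1 := by
    rcases Set.eq_empty_or_nonempty E with hEe | ⟨w, hw⟩
    · exact ⟨1, one_pos, le_refl _, fun y hy => absurd (hEe ▸ hy) (Set.notMem_empty y)⟩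
    · have hEclosed : IsClosed E := by
        rw [hE, Set.setOf_and, Set.setOf_and]
        exact IsClosed.inter (by simpa using hclosed)
          (IsClosed.inter (isClosed_le (by fun_prop) (by fun_prop))
            (isClosed_le (by fun_prop) (by fun_prop)))
      have hEsub : E ⊆ Set.Icc ((0:ℝ), (0:ℝ)) ((2*a*b + a)/b, (2*a*b + a)/a) := by
        rintro y ⟨hyA, h1, h2⟩
        obtain ⟨p1, p2⟩ := hApos y hyA
        refine ⟨⟨p1.le, p2.le⟩, ⟨?_, ?_⟩⟩
        · rw [le_div_iff₀ hb]; nlinarith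
        · rw [le_div_iff₀ ha]; nlinarith
      have hEcompact := compact_of_bounds hEclosed hEsub
      obtain ⟨p, hpE, hpmin⟩ := hEcompact.exists_isMinOn ⟨w, hw⟩
        (Continuous.continuousOn (by fun_prop) : ContinuousOn (fun y : ℝ × ℝ => y.1) _)
      rw [isMinOn_iff] at hpmin
      have hμ : 0 < p.1 := (hApos p hpE.1).1
      refine ⟨min 1 (b * p.1 / a), by positivity, min_le_left _ _, ?_⟩
      intro y hy
      have h1 : min 1 (b * p.1 / a) ≤ b * p.1 / a := min_le_right _ _
      have h2 := hpmin y hy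
      have : min 1 (b * p.1 / a) * a ≤ b * p.1 := by
        rw [← le_div_iff₀ ha]
        exact h1
      nlinarith [mul_le_mul_of_nonneg_left h2 hb.le]
  obtain ⟨ε, hε0, hεδ, hεD⟩ := hgood δ hδ0
  obtain ⟨z, hzR, hzM, hzval⟩ := hminex ε hε0
  obtain ⟨hz1pos, hz2pos⟩ := hR z hzR
  have hbε : 0 < b + ε := by linarith
  have hz1 : z.1 ≤ 2*a := by nlinarith
  have hz2 : z.2 ≤ 2*b := by
    by_contra hcon
    push_neg at hcon
    have hzE : z ∈ E := by
      refine ⟨hRA hzR, hcon.le, ?_⟩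
      nlinarith
    have := hδE z hzE
    nlinarith
  refine ⟨z, hzR, hz1, hz2, ε, hε0, ?_⟩
  intro y hyR hdom
  by_contra hne
  apply hεD
  refine ⟨hε0, y, ⟨hRA hyR, ?_⟩, z, hzM, hne⟩
  intro w hwA
  have h1 : (b+ε) * y.1 + a * y.2 ≤ (b+ε) * z.1 + a * z.2 := by nlinarith
  exact le_trans h1 (hzM.2 w hwA)

lemma key_min (R : Set (ℝ × ℝ)) (hR : ∀ y ∈ R, 0 < y.1 ∧ 0 < y.2)
    (hclosed : IsClosed (R + {y : ℝ × ℝ | 0 ≤ y.1 ∧ 0 ≤ y.2}))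
    (cψ sψ sφ cφ : ℝ) (hcψ : 0 < cψ) (hcφ : 0 < cφ) (hsψ : 0 ≤ sψ) (hsφ : 0 ≤ sφ)
    (hdet : 0 < cψ * cφ - sψ * sφ)
    (v : ℝ × ℝ) (hv : v ∈ R) :
    ∃ z ∈ R, cψ * z.1 + sψ * z.2 ≤ cψ * v.1 + sψ * v.2 ∧
      sφ * z.1 + cφ * z.2 ≤ sφ * v.1 + cφ * v.2 ∧
      ∀ y ∈ R, 0 ≤ cψ * (z.1 - y.1) + sψ * (z.2 - y.2) →
        0 ≤ sφ * (z.1 - y.1) + cφ * (z.2 - y.2) → y = z := by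
  set A := R + {y : ℝ × ℝ | 0 ≤ y.1 ∧ 0 ≤ y.2} with hA
  have hApos : ∀ y ∈ A, 0 < y.1 ∧ 0 < y.2 := by
    intro y hy
    obtain ⟨u, hu, h1, h2⟩ := (memQ_iff R y).mp hy
    exact ⟨lt_of_lt_of_le (hR u hu).1 h1, lt_of_lt_of_le (hR u hu).2 h2⟩
  have hRA : R ⊆ A := by
    intro u hu
    exact (memQ_iff R u).mpr ⟨u, hu, le_refl _, le_refl _⟩
  have hBclosed : IsClosed {y : ℝ × ℝ | y ∈ A ∧
      cψ * y.1 + sψ * y.2 ≤ cψ * v.1 + sψ * v.2 ∧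
      sφ * y.1 + cφ * y.2 ≤ sφ * v.1 + cφ * v.2} := by
    rw [Set.setOf_and, Set.setOf_and]
    refine IsClosed.inter (by simpa using hclosed) (IsClosed.inter ?_ ?_) <;>
      exact isClosed_le (by fun_prop) (by fun_prop)
  have hBsub : {y : ℝ × ℝ | y ∈ A ∧
      cψ * y.1 + sψ * y.2 ≤ cψ * v.1 + sψ * v.2 ∧
      sφ * y.1 + cφ * y.2 ≤ sφ * v.1 + cφ * v.2} ⊆
      Set.Icc ((0:ℝ), (0:ℝ))
        ((cψ * v.1 + sψ * v.2)/cψ, (sφ * v.1 + cφ * v.2)/cφ) := by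
    rintro y ⟨hyA, h1, h2⟩
    obtain ⟨p1, p2⟩ := hApos y hyA
    refine ⟨⟨p1.le, p2.le⟩, ⟨?_, ?_⟩⟩
    · rw [le_div_iff₀ hcψ]
      nlinarith [mul_nonneg hsψ p2.le]
    · rw [le_div_iff₀ hcφ]
      nlinarith [mul_nonneg hsφ p1.le]
  have hBcompact := compact_of_bounds hBclosed hBsub
  have hvB : v ∈ {y : ℝ × ℝ | y ∈ A ∧
      cψ * y.1 + sψ * y.2 ≤ cψ * v.1 + sψ * v.2 ∧
      sφ * y.1 + cφ * y.2 ≤ sφ * v.1 + cφ * v.2} := ⟨hRA hv, le_refl _, le_refl _⟩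
  obtain ⟨y₀, hy₀B, hy₀min⟩ := hBcompact.exists_isMinOn ⟨v, hvB⟩
    (Continuous.continuousOn (by fun_prop) :
      ContinuousOn (fun y : ℝ × ℝ => (cψ + sφ) * y.1 + (sψ + cφ) * y.2) _)
  rw [isMinOn_iff] at hy₀min
  obtain ⟨z, hzR, hz1, hz2⟩ := (memQ_iff R y₀).mp hy₀B.1
  obtain ⟨hy₀A, e1, e2⟩ := hy₀B
  have hzB1 : cψ * z.1 + sψ * z.2 ≤ cψ * v.1 + sψ * v.2 := by
    nlinarith [mul_le_mul_of_nonneg_left hz1 hcψ.le, mul_le_mul_of_nonneg_left hz2 hsψ]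
  have hzB2 : sφ * z.1 + cφ * z.2 ≤ sφ * v.1 + cφ * v.2 := by
    nlinarith [mul_le_mul_of_nonneg_left hz1 hsφ, mul_le_mul_of_nonneg_left hz2 hcφ.le]
  refine ⟨z, hzR, hzB1, hzB2, ?_⟩
  intro y hyR d1 d2
  -- y ∈ B
  have hyB : y ∈ {y : ℝ × ℝ | y ∈ A ∧
      cψ * y.1 + sψ * y.2 ≤ cψ * v.1 + sψ * v.2 ∧
      sφ * y.1 + cφ * y.2 ≤ sφ * v.1 + cφ * v.2} :=
    ⟨hRA hyR, by nlinarith, by nlinarith⟩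
  have hmin2 := hy₀min y hyB
  have hminz : (cψ + sφ) * z.1 + (sψ + cφ) * z.2 ≤ (cψ + sφ) * y₀.1 + (sψ + cφ) * y₀.2 := by
    nlinarith [mul_le_mul_of_nonneg_left hz1 (by positivity : (0:ℝ) ≤ cψ + sφ),
      mul_le_mul_of_nonneg_left hz2 (by positivity : (0:ℝ) ≤ sψ + cφ)]
  have hze1 : cψ * (z.1 - y.1) + sψ * (z.2 - y.2) = 0 := by linarith
  have hze2 : sφ * (z.1 - y.1) + cφ * (z.2 - y.2) = 0 := by linarith
  have h1 : (cψ * cφ - sψ * sφ) * (z.1 - y.1) = 0 := by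
    linear_combination cφ * hze1 - sψ * hze2
  have h2 : (cψ * cφ - sψ * sφ) * (z.2 - y.2) = 0 := by
    linear_combination cψ * hze2 - sφ * hze1
  have hd1 : z.1 - y.1 = 0 := by
    rcases mul_eq_zero.mp h1 with h | h
    · exact absurd h hdet.ne'
    · exact h
  have hd2 : z.2 - y.2 = 0 := by
    rcases mul_eq_zero.mp h2 with h | h
    · exact absurd h hdet.ne'
    · exact h
  apply Prod.ext <;> linarith

lemma tan_mono_of {x y : ℝ} (hx : 0 ≤ x) (hy : y < Real.pi/2) (hxy : x ≤ y) :
    Real.tan x ≤ Real.tan y := by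
  rcases eq_or_lt_of_le hxy with rfl | h
  · exact le_refl _
  · exact (Real.tan_lt_tan_of_nonneg_of_lt_pi_div_two hx hy h).le

lemma phi_core {t a b : ℝ} (ht0 : 0 ≤ t) (ht1 : t < 1) (ha : 0 < a) (hb : 0 < b) (hab : a ≤ b) :
    ∃ φ, 0 ≤ φ ∧ φ ≤ 2 * Real.arctan t ∧
      b * Real.tan (2 * Real.arctan t - φ) ≤ t * a ∧ a * Real.tan φ ≤ t * b := by
  have hat : 0 ≤ Real.arctan t := by
    have := Real.arctan_strictMono.monotone ht0
    rwa [Real.arctan_zero] at this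
  have hθlt : 2 * Real.arctan t < Real.pi / 2 := by
    have h1 : Real.arctan t < Real.pi / 4 := by
      have := Real.arctan_strictMono ht1
      rwa [Real.arctan_one] at this
    linarith
  set ψ := Real.arctan (t * a / b) with hψdef
  have hψ0 : 0 ≤ ψ := by
    have := Real.arctan_strictMono.monotone (by positivity : (0:ℝ) ≤ t * a / b)
    rwa [Real.arctan_zero] at this
  have hψle : ψ ≤ Real.arctan t := by
    apply Real.arctan_strictMono.monotone
    rw [div_le_iff₀ hb]
    nlinarith
  have hψleθ : ψ ≤ 2 * Real.arctan t := by linarith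
  refine ⟨2 * Real.arctan t - ψ, by linarith, by linarith, ?_, ?_⟩
  · have : 2 * Real.arctan t - (2 * Real.arctan t - ψ) = ψ := by ring
    rw [this, hψdef, Real.tan_arctan]
    rw [mul_div_assoc']
    rw [mul_comm b (t*a)]
    rw [mul_div_assoc]
    rw [div_self hb.ne', mul_one]
  · -- a * tan φ ≤ t * b  with φ = θ - ψ
    have key : 2 * Real.arctan t - ψ ≤ Real.arctan (t * b / a) := by
      have hprod : (t * a / b) * (t * b / a) < 1 := by
        have : (t * a / b) * (t * b / a) = t ^ 2 := by field_simp
        rw [this]; nlinarith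
      have hadd := Real.arctan_add hprod
      have h2 : 2 * Real.arctan t = Real.arctan (2 * t / (1 - t ^ 2)) :=
        Real.two_mul_arctan (by linarith) ht1
      rw [sub_le_iff_le_add, add_comm, hψdef, hadd, h2]
      apply Real.arctan_strictMono.monotone
      have hprod2 : (t * a / b) * (t * b / a) = t ^ 2 := by field_simp
      rw [hprod2]
      have hnum : 2 * t ≤ t * a / b + t * b / a := by
        rw [div_add_div _ _ hb.ne' ha.ne', le_div_iff₀ (by positivity)]
        nlinarith [sq_nonneg (a - b)]
      gcongr
      nlinarith
    have htan : Real.tan (2 * Real.arctan t - ψ) ≤ t * b / a := by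
      have := tan_mono_of (by linarith : (0:ℝ) ≤ 2 * Real.arctan t - ψ)
        (Real.arctan_lt_pi_div_two _) key
      rwa [Real.tan_arctan] at this
    calc a * Real.tan (2 * Real.arctan t - ψ) ≤ a * (t * b / a) :=
          mul_le_mul_of_nonneg_left htan ha.le
      _ = t * b := by field_simp

lemma phi_choice {t a b : ℝ} (ht0 : 0 ≤ t) (ht1 : t < 1) (ha : 0 < a) (hb : 0 < b) :
    ∃ φ, 0 ≤ φ ∧ φ ≤ 2 * Real.arctan t ∧
      b * Real.tan (2 * Real.arctan t - φ) ≤ t * a ∧ a * Real.tan φ ≤ t * b := by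
  rcases le_total a b with hab | hab
  · exact phi_core ht0 ht1 ha hb hab
  · obtain ⟨φ₀, h0, h1, h2, h3⟩ := phi_core ht0 ht1 hb ha hab
    refine ⟨2 * Real.arctan t - φ₀, by linarith, by linarith, ?_, ?_⟩
    · have he : 2 * Real.arctan t - (2 * Real.arctan t - φ₀) = φ₀ := by ring
      rw [he]; exact h3
    · exact h2

/-- the set of `γ`-supported solutions is a
`(1 + tan(γ/2 - π/4))`-approximation. -/
theorem stmt_16 (X : Type) (hX : Nonempty X) (f : X → ℝ × ℝ)
    (hf : ∀ x, 0 < (f x).1 ∧ 0 < (f x).2)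
    (hclosed : IsClosed (Set.range f + {y : ℝ × ℝ | 0 ≤ y.1 ∧ 0 ≤ y.2}))
    (γ : ℝ) (hγ : γ ∈ Set.Icc (Real.pi/2) Real.pi) :
    IsApprox (1 + Real.tan (γ/2 - Real.pi/4)) f {x : X | GammaSupported γ f x} := by
  have hπ := Real.pi_pos
  have hR : ∀ y ∈ Set.range f, 0 < y.1 ∧ 0 < y.2 := by
    rintro y ⟨x₀, rfl⟩; exact hf x₀
  intro x
  obtain ⟨ha, hb⟩ := hf x
  rcases lt_or_eq_of_le hγ.2 with hlt | heq
  · -- case γ < π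
    have hγ1 := hγ.1
    have hhalf : γ/2 - Real.pi/4 = (γ - Real.pi/2)/2 := by ring
    have hang0 : 0 ≤ (γ - Real.pi/2)/2 := by linarith
    have hanglt : (γ - Real.pi/2)/2 < Real.pi/4 := by linarith
    have ht0 : 0 ≤ Real.tan (γ/2 - Real.pi/4) := by
      rw [hhalf]
      exact Real.tan_nonneg_of_nonneg_of_le_pi_div_two hang0 (by linarith)
    have ht1 : Real.tan (γ/2 - Real.pi/4) < 1 := by
      rw [hhalf, ← Real.tan_pi_div_four]
      exact Real.tan_lt_tan_of_nonneg_of_lt_pi_div_two hang0 (by linarith) hanglt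
    have hθeq : 2 * Real.arctan (Real.tan (γ/2 - Real.pi/4)) = γ - Real.pi/2 := by
      rw [hhalf, Real.arctan_tan (by linarith) (by linarith)]
      ring
    obtain ⟨φ, hφ0, hφθ, hb1, ha1⟩ := phi_choice ht0 ht1 ha hb
    rw [hθeq] at hφθ hb1
    have hψ0 : 0 ≤ γ - Real.pi/2 - φ := by linarith
    have hψlt : γ - Real.pi/2 - φ < Real.pi/2 := by linarith
    have hφlt : φ < Real.pi/2 := by linarith
    have hcψ : 0 < Real.cos (γ - Real.pi/2 - φ) :=
      Real.cos_pos_of_mem_Ioo ⟨by linarith, hψlt⟩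
    have hcφ : 0 < Real.cos φ := Real.cos_pos_of_mem_Ioo ⟨by linarith, hφlt⟩
    have hsψ : 0 ≤ Real.sin (γ - Real.pi/2 - φ) :=
      Real.sin_nonneg_of_nonneg_of_le_pi hψ0 (by linarith)
    have hsφ : 0 ≤ Real.sin φ := Real.sin_nonneg_of_nonneg_of_le_pi hφ0 (by linarith)
    have hbs : (f x).2 * Real.sin (γ - Real.pi/2 - φ) ≤
        Real.tan (γ/2 - Real.pi/4) * (f x).1 * Real.cos (γ - Real.pi/2 - φ) := by
      rw [Real.tan_eq_sin_div_cos, mul_div_assoc', div_le_iff₀ hcψ] at hb1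
      linarith
    have has : (f x).1 * Real.sin φ ≤
        Real.tan (γ/2 - Real.pi/4) * (f x).2 * Real.cos φ := by
      rw [Real.tan_eq_sin_div_cos, mul_div_assoc', div_le_iff₀ hcφ] at ha1
      linarith
    have hdet : 0 < Real.cos (γ - Real.pi/2 - φ) * Real.cos φ -
        Real.sin (γ - Real.pi/2 - φ) * Real.sin φ := by
      have hca : Real.cos ((γ - Real.pi/2 - φ) + φ) =
          Real.cos (γ - Real.pi/2 - φ) * Real.cos φ -
          Real.sin (γ - Real.pi/2 - φ) * Real.sin φ := Real.cos_add _ _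
      rw [← hca]
      have he : (γ - Real.pi/2 - φ) + φ = γ - Real.pi/2 := by ring
      rw [he]
      exact Real.cos_pos_of_mem_Ioo ⟨by linarith, by linarith⟩
    obtain ⟨z, hzR, hzB1, hzB2, hopt⟩ := key_min (Set.range f) hR hclosed
      (Real.cos (γ - Real.pi/2 - φ)) (Real.sin (γ - Real.pi/2 - φ))
      (Real.sin φ) (Real.cos φ) hcψ hcφ hsψ hsφ hdet (f x) ⟨x, rfl⟩
    obtain ⟨x', hx'⟩ := hzR
    subst hx'
    refine ⟨x', ?_, ?_, ?_⟩
    · simp only [Set.mem_setOf_eq]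
      refine ⟨φ, ⟨⟨hφ0, hφθ⟩, ?_⟩, ?_⟩
      · simp only [Set.mem_insert_iff, Set.mem_singleton_iff]
        push_neg
        constructor
        · intro h; rw [h] at hφ0; linarith
        · intro h; rw [h] at hφlt; linarith
      · rintro ⟨x'', hne, hle⟩
        simp only [leC, coneC, Tmap, Set.mem_setOf_eq, Prod.fst_sub, Prod.snd_sub] at hle
        exact hne (hopt (f x'') ⟨x'', rfl⟩ hle.1 hle.2)
    · have h2pos := (hf x').2
      have hkey : Real.cos (γ - Real.pi/2 - φ) * (f x').1 ≤
          Real.cos (γ - Real.pi/2 - φ) * ((1 + Real.tan (γ/2 - Real.pi/4)) * (f x).1) := by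
        nlinarith [mul_nonneg hsψ h2pos.le]
      exact le_of_mul_le_mul_left hkey hcψ
    · have h1pos := (hf x').1
      have hkey : Real.cos φ * (f x').2 ≤
          Real.cos φ * ((1 + Real.tan (γ/2 - Real.pi/4)) * (f x).2) := by
        nlinarith [mul_nonneg hsφ h1pos.le]
      exact le_of_mul_le_mul_left hkey hcφ
  · -- case γ = π
    subst heq
    have hα : Real.tan (Real.pi/2 - Real.pi/4) = 1 := by
      rw [show Real.pi/2 - Real.pi/4 = Real.pi/4 by ring, Real.tan_pi_div_four]
    have hv : ((f x).1, (f x).2) ∈ Set.range f := by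
      rw [Prod.mk.eta]; exact ⟨x, rfl⟩
    obtain ⟨z, hzR, hz1, hz2, ε, hε0, hopt⟩ := key_pi (Set.range f) hR hclosed
      (f x).1 (f x).2 ha hb hv
    obtain ⟨x', hx'⟩ := hzR
    subst hx'
    have hu : 0 < ((f x).2 + ε)/(f x).1 := by positivity
    have hφpos : 0 < Real.arctan (((f x).2 + ε)/(f x).1) := by
      have := Real.arctan_strictMono hu
      rwa [Real.arctan_zero] at this
    have hφlt := Real.arctan_lt_pi_div_two (((f x).2 + ε)/(f x).1)
    refine ⟨x', ?_, ?_, ?_⟩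
    · simp only [Set.mem_setOf_eq]
      refine ⟨Real.arctan (((f x).2 + ε)/(f x).1), ⟨⟨hφpos.le, by linarith⟩, ?_⟩, ?_⟩
      · simp only [Set.mem_insert_iff, Set.mem_singleton_iff]
        push_neg
        constructor
        · intro h; rw [h] at hφpos; linarith
        · intro h; rw [h] at hφlt; linarith
      · rintro ⟨x'', hne, hle⟩
        simp only [leC, coneC, Tmap, Set.mem_setOf_eq, Prod.fst_sub, Prod.snd_sub] at hle
        have h2 := hle.2
        rw [Real.sin_arctan, Real.cos_arctan] at h2
        have hs : 0 < Real.sqrt (1 + (((f x).2 + ε)/(f x).1)^2) :=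
          Real.sqrt_pos.mpr (by positivity)
        have hkey : 0 ≤ ((f x).2 + ε) * ((f x').1 - (f x'').1) +
            (f x).1 * ((f x').2 - (f x'').2) := by
          have h3 : 0 ≤ ((f x).1 * Real.sqrt (1 + (((f x).2 + ε)/(f x).1)^2)) *
              ((((f x).2 + ε)/(f x).1) / Real.sqrt (1 + (((f x).2 + ε)/(f x).1)^2) *
                ((f x').1 - (f x'').1) +
               1 / Real.sqrt (1 + (((f x).2 + ε)/(f x).1)^2) * ((f x').2 - (f x'').2)) :=
            mul_nonneg (by positivity) h2
          have h4 : ((f x).1 * Real.sqrt (1 + (((f x).2 + ε)/(f x).1)^2)) *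
              ((((f x).2 + ε)/(f x).1) / Real.sqrt (1 + (((f x).2 + ε)/(f x).1)^2) *
                ((f x').1 - (f x'').1) +
               1 / Real.sqrt (1 + (((f x).2 + ε)/(f x).1)^2) * ((f x').2 - (f x'').2)) =
              ((f x).2 + ε) * ((f x').1 - (f x'').1) +
              (f x).1 * ((f x').2 - (f x'').2) := by
            field_simp
          rwa [h4] at h3
        exact hne (hopt (f x'') ⟨x'', rfl⟩ hkey)
    · rw [hα]; linarith
    · rw [hα]; linarith
end
end

section
/- Let (X, f) be an instance of a biobjective minimization problem such that f(X) + ℝ²_≥ is closed, and let γ ∈ [π/2, π]. Then the set of γ-supported solutions is a (2γ/π)-approximation with respect to the componentwise order ≤. -/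
open Real Set Pointwise

noncomputable section

/-! ### Auxiliary material for the proof of `stmt_17` -/

section AuxStmt17

open Filter Topology

variable {X : Type}

/-- The "upper image" set `f(X) + ℝ²≥`. -/
abbrev Yset (f : X → ℝ × ℝ) : Set (ℝ × ℝ) :=
  Set.range f + {y : ℝ × ℝ | 0 ≤ y.1 ∧ 0 ≤ y.2}

lemma mem_Yset_self (f : X → ℝ × ℝ) (x : X) : f x ∈ Yset f := by
  have h : f x + (0 : ℝ × ℝ) ∈ Yset f :=
    Set.add_mem_add (Set.mem_range_self x) (by simp)
  simpa using h

lemma Yset_decompose {f : X → ℝ × ℝ} {y : ℝ × ℝ} (hy : y ∈ Yset f) :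
    ∃ x : X, (f x).1 ≤ y.1 ∧ (f x).2 ≤ y.2 := by
  rcases Set.mem_add.mp hy with ⟨u, hu, p, hp, huv⟩
  rcases hu with ⟨x, rfl⟩
  refine ⟨x, ?_, ?_⟩
  · have : (f x + p).1 = (f x).1 + p.1 := rfl
    rw [← huv, this]; linarith [hp.1]
  · have : (f x + p).2 = (f x).2 + p.2 := rfl
    rw [← huv, this]; linarith [hp.2]

lemma Yset_pos {f : X → ℝ × ℝ} (hf : ∀ x, 0 < (f x).1 ∧ 0 < (f x).2)
    {y : ℝ × ℝ} (hy : y ∈ Yset f) : 0 < y.1 ∧ 0 < y.2 := by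
  obtain ⟨x, h1, h2⟩ := Yset_decompose hy
  exact ⟨lt_of_lt_of_le (hf x).1 h1, lt_of_lt_of_le (hf x).2 h2⟩

lemma compact_slice {f : X → ℝ × ℝ} (hf : ∀ x, 0 < (f x).1 ∧ 0 < (f x).2)
    (hclosed : IsClosed (Yset f)) {C : Set (ℝ × ℝ)} (hC : IsClosed C) (M : ℝ)
    (hbd : ∀ y ∈ Yset f ∩ C, y.1 ≤ M ∧ y.2 ≤ M) :
    IsCompact (Yset f ∩ C) := by
  apply Metric.isCompact_of_isClosed_isBounded (hclosed.inter hC)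
  apply (isCompact_Icc (a := ((0 : ℝ), (0 : ℝ))) (b := (M, M))).isBounded.subset
  intro y hy
  have hpos := Yset_pos hf hy.1
  have hb := hbd y hy
  rw [Set.mem_Icc]
  exact ⟨⟨hpos.1.le, hpos.2.le⟩, ⟨hb.1, hb.2⟩⟩

lemma exists_min_on {f : X → ℝ × ℝ} (hf : ∀ x, 0 < (f x).1 ∧ 0 < (f x).2)
    (hclosed : IsClosed (Yset f)) {C : Set (ℝ × ℝ)} (hC : IsClosed C) (M : ℝ)
    (hbd : ∀ y ∈ Yset f ∩ C, y.1 ≤ M ∧ y.2 ≤ M)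
    (hne : (Yset f ∩ C).Nonempty) {g : ℝ × ℝ → ℝ} (hg : Continuous g) :
    ∃ y ∈ Yset f ∩ C, ∀ z ∈ Yset f ∩ C, g y ≤ g z := by
  obtain ⟨y, hy, hmin⟩ :=
    (compact_slice hf hclosed hC M hbd).exists_isMinOn hne hg.continuousOn
  exact ⟨y, hy, fun z hz => hmin hz⟩

/-- Part I engine: for a pointed cone given by the matrix `[[e1,s1],[s2,e2]]`
(positive diagonal, nonnegative entries, positive determinant), there is a
feasible point whose `T`-image is dominated by that of `x` and which is a
minimal element for the componentwise ordering of `T`-images. -/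
lemma partI_engine {f : X → ℝ × ℝ} (hf : ∀ x, 0 < (f x).1 ∧ 0 < (f x).2)
    (hclosed : IsClosed (Yset f))
    {e1 s1 s2 e2 : ℝ} (he1 : 0 < e1) (he2 : 0 < e2) (hs1 : 0 ≤ s1) (hs2 : 0 ≤ s2)
    (hdet : 0 < e1 * e2 - s1 * s2) (x : X) :
    ∃ xs : X,
      (e1 * (f xs).1 + s1 * (f xs).2 ≤ e1 * (f x).1 + s1 * (f x).2) ∧
      (s2 * (f xs).1 + e2 * (f xs).2 ≤ s2 * (f x).1 + e2 * (f x).2) ∧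
      (∀ x' : X,
        e1 * (f x').1 + s1 * (f x').2 ≤ e1 * (f xs).1 + s1 * (f xs).2 →
        s2 * (f x').1 + e2 * (f x').2 ≤ s2 * (f xs).1 + e2 * (f xs).2 →
        f x' = f xs) := by
  classical
  set a1 : ℝ := e1 * (f x).1 + s1 * (f x).2 with ha1
  set a2 : ℝ := s2 * (f x).1 + e2 * (f x).2 with ha2
  set C : Set (ℝ × ℝ) := {y | e1 * y.1 + s1 * y.2 ≤ a1 ∧ s2 * y.1 + e2 * y.2 ≤ a2} with hCdef
  have hT1cont : Continuous fun y : ℝ × ℝ => e1 * y.1 + s1 * y.2 := by fun_prop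
  have hT2cont : Continuous fun y : ℝ × ℝ => s2 * y.1 + e2 * y.2 := by fun_prop
  have hC : IsClosed C := by
    have h1 : IsClosed {y : ℝ × ℝ | e1 * y.1 + s1 * y.2 ≤ a1} :=
      isClosed_le hT1cont continuous_const
    have h2 : IsClosed {y : ℝ × ℝ | s2 * y.1 + e2 * y.2 ≤ a2} :=
      isClosed_le hT2cont continuous_const
    exact h1.inter h2
  have hbd : ∀ y ∈ Yset f ∩ C, y.1 ≤ max (a1 / e1) (a2 / e2) ∧
      y.2 ≤ max (a1 / e1) (a2 / e2) := by
    intro y hy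
    have hpos := Yset_pos hf hy.1
    obtain ⟨hy1, hy2⟩ := hy.2
    constructor
    · refine le_trans ?_ (le_max_left _ _)
      rw [le_div_iff₀ he1]
      have : 0 ≤ s1 * y.2 := mul_nonneg hs1 hpos.2.le
      linarith
    · refine le_trans ?_ (le_max_right _ _)
      rw [le_div_iff₀ he2]
      have : 0 ≤ s2 * y.1 := mul_nonneg hs2 hpos.1.le
      linarith
  have hne : (Yset f ∩ C).Nonempty :=
    ⟨f x, mem_Yset_self f x, le_refl a1, le_refl a2⟩
  obtain ⟨y0, hy0, hmin⟩ := exists_min_on hf hclosed hC _ hbd hne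
    (g := fun y => (e1 * y.1 + s1 * y.2) + (s2 * y.1 + e2 * y.2))
    (by fun_prop)
  obtain ⟨xs, hxs1, hxs2⟩ := Yset_decompose hy0.1
  have hT1xs : e1 * (f xs).1 + s1 * (f xs).2 ≤ e1 * y0.1 + s1 * y0.2 := by
    have h1 : e1 * (f xs).1 ≤ e1 * y0.1 := by nlinarith
    have h2 : s1 * (f xs).2 ≤ s1 * y0.2 := by nlinarith
    linarith
  have hT2xs : s2 * (f xs).1 + e2 * (f xs).2 ≤ s2 * y0.1 + e2 * y0.2 := by
    have h1 : s2 * (f xs).1 ≤ s2 * y0.1 := by nlinarith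
    have h2 : e2 * (f xs).2 ≤ e2 * y0.2 := by nlinarith
    linarith
  have hxsC : f xs ∈ Yset f ∩ C := by
    refine ⟨mem_Yset_self f xs, le_trans hT1xs hy0.2.1, le_trans hT2xs hy0.2.2⟩
  have hxsmin : ∀ z ∈ Yset f ∩ C,
      (e1 * (f xs).1 + s1 * (f xs).2) + (s2 * (f xs).1 + e2 * (f xs).2) ≤
      (e1 * z.1 + s1 * z.2) + (s2 * z.1 + e2 * z.2) := by
    intro z hz
    calc (e1 * (f xs).1 + s1 * (f xs).2) + (s2 * (f xs).1 + e2 * (f xs).2)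
        ≤ (e1 * y0.1 + s1 * y0.2) + (s2 * y0.1 + e2 * y0.2) := by linarith
      _ ≤ _ := hmin z hz
  refine ⟨xs, hxsC.2.1, hxsC.2.2, ?_⟩
  intro x' hb1 hb2
  have hx'C : f x' ∈ Yset f ∩ C :=
    ⟨mem_Yset_self f x', le_trans hb1 hxsC.2.1, le_trans hb2 hxsC.2.2⟩
  have hge := hxsmin (f x') hx'C
  have heq1 : e1 * (f x').1 + s1 * (f x').2 = e1 * (f xs).1 + s1 * (f xs).2 :=
    le_antisymm hb1 (by linarith)
  have heq2 : s2 * (f x').1 + e2 * (f x').2 = s2 * (f xs).1 + e2 * (f xs).2 :=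
    le_antisymm hb2 (by linarith)
  have hu1 : (f x').1 = (f xs).1 := by
    have h3 : (e1 * e2 - s1 * s2) * ((f x').1 - (f xs).1) = 0 := by
      linear_combination e2 * heq1 - s1 * heq2
    rcases mul_eq_zero.mp h3 with h | h
    · exact absurd h (ne_of_gt hdet)
    · linarith
  have hu2 : (f x').2 = (f xs).2 := by
    have h4 : e2 * ((f x').2 - (f xs).2) = 0 := by
      linear_combination heq2 - s2 * hu1
    rcases mul_eq_zero.mp h4 with h | h
    · exact absurd h (ne_of_gt he2)
    · linarith
  exact Prod.ext hu1 hu2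

/-! #### Trigonometric inequalities for the choice of `φ` -/

lemma tan_convex_bound {u : ℝ} (h0 : 0 ≤ u) (h1 : u ≤ π / 4) :
    Real.tan u ≤ 4 / π * u := by
  have hπ := Real.pi_pos
  have hsub : Set.Icc (0 : ℝ) (π / 4) ⊆ Set.Ioo (-(π / 2)) (π / 2) := by
    intro w hw
    constructor <;> [linarith [hw.1]; linarith [hw.2]]
  have hconv : ConvexOn ℝ (Set.Icc (0 : ℝ) (π / 4)) Real.tan := by
    apply MonotoneOn.convexOn_of_deriv (convex_Icc _ _)
    · exact Real.continuousOn_tan_Ioo.mono hsub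
    · rw [interior_Icc]
      intro w hw
      have hcw : Real.cos w ≠ 0 :=
        ne_of_gt (Real.cos_pos_of_mem_Ioo (hsub (Set.mem_Icc.mpr ⟨hw.1.le, hw.2.le⟩)))
      exact (Real.differentiableAt_tan.mpr hcw).differentiableWithinAt
    · rw [interior_Icc]
      intro w hw w' hw' hww'
      rw [Real.deriv_tan, Real.deriv_tan]
      have hcw : 0 < Real.cos w :=
        Real.cos_pos_of_mem_Ioo (hsub (Set.mem_Icc.mpr ⟨hw.1.le, hw.2.le⟩))
      have hcw' : 0 < Real.cos w' :=
        Real.cos_pos_of_mem_Ioo (hsub (Set.mem_Icc.mpr ⟨hw'.1.le, hw'.2.le⟩))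
      have hle : Real.cos w' ≤ Real.cos w :=
        Real.cos_le_cos_of_nonneg_of_le_pi hw.1.le (by linarith [hw'.2]) hww'
      have h2 : Real.cos w' ^ 2 ≤ Real.cos w ^ 2 := by nlinarith
      have h2' : 0 < Real.cos w' ^ 2 := by positivity
      exact one_div_le_one_div_of_le h2' h2
  set s : ℝ := 4 / π * u with hs
  have hs0 : 0 ≤ s := by positivity
  have hs1 : s ≤ 1 := by
    rw [hs, div_mul_eq_mul_div, div_le_one hπ]; linarith
  have key := hconv.2 (Set.left_mem_Icc.mpr (by positivity))
    (Set.right_mem_Icc.mpr (by positivity)) (by linarith : (0:ℝ) ≤ 1 - s) hs0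
    (by ring)
  have harg : (1 - s) • (0 : ℝ) + s • (π / 4) = u := by
    rw [smul_eq_mul, smul_eq_mul, hs]
    field_simp
    ring
  rw [harg] at key
  calc Real.tan u ≤ (1 - s) • Real.tan 0 + s • Real.tan (π / 4) := key
    _ = s := by rw [Real.tan_zero, Real.tan_pi_div_four, smul_eq_mul, smul_eq_mul]; ring
    _ = 4 / π * u := rfl

lemma half_le_arctan {δ : ℝ} (h0 : 0 ≤ δ) (h1 : δ < π / 2) :
    δ / 2 ≤ Real.arctan (2 * δ / π) := by
  have hπ := Real.pi_pos
  have h := tan_convex_bound (u := δ / 2) (by linarith) (by linarith)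
  have h2 : 4 / π * (δ / 2) = 2 * δ / π := by ring
  rw [h2] at h
  have h3 : δ / 2 = Real.arctan (Real.tan (δ / 2)) :=
    (Real.arctan_tan (by linarith) (by linarith)).symm
  rw [h3]
  exact Real.arctan_strictMono.monotone h

lemma exists_phi {δ a b : ℝ} (h0 : 0 ≤ δ) (h1 : δ < π / 2) (ha : 0 < a) (hb : 0 < b) :
    ∃ φ, 0 ≤ φ ∧ φ ≤ δ ∧ Real.tan φ * a ≤ (2 * δ / π) * b ∧
      Real.tan (δ - φ) * b ≤ (2 * δ / π) * a := by
  have hπ := Real.pi_pos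
  set c : ℝ := 2 * δ / π with hc
  have hc0 : 0 ≤ c := by positivity
  have hc1 : c < 1 := by rw [hc, div_lt_one hπ]; linarith
  set A : ℝ := Real.arctan (c * (b / a)) with hA
  have hA0 : 0 ≤ A := by
    rw [hA, ← Real.arctan_zero]
    exact Real.arctan_strictMono.monotone (by positivity)
  have hAmem := Real.arctan_mem_Ioo (c * (b / a))
  rcases le_or_gt δ A with hcase | hcase
  · refine ⟨δ, h0, le_refl δ, ?_, ?_⟩
    · have htan : Real.tan δ ≤ Real.tan A :=
        Real.strictMonoOn_tan.monotoneOn ⟨by linarith, h1⟩ hAmem hcase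
      rw [hA, Real.tan_arctan] at htan
      have : Real.tan δ * a ≤ c * (b / a) * a := by nlinarith
      calc Real.tan δ * a ≤ c * (b / a) * a := this
        _ = c * b := by field_simp
    · simp only [sub_self, Real.tan_zero, zero_mul]
      exact mul_nonneg hc0 ha.le
  · set B : ℝ := Real.arctan (c * (a / b)) with hB
    have hBmem := Real.arctan_mem_Ioo (c * (a / b))
    have hB0 : 0 ≤ B := by
      rw [hB, ← Real.arctan_zero]
      exact Real.arctan_strictMono.monotone (by positivity)
    have hprod : c * (b / a) * (c * (a / b)) = c * c := by field_simp
    have hcc : c * c < 1 := by nlinarith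
    have hprodlt : c * (b / a) * (c * (a / b)) < 1 := by rw [hprod]; exact hcc
    have hsum : A + B = Real.arctan ((c * (b / a) + c * (a / b)) / (1 - c * c)) := by
      rw [hA, hB, Real.arctan_add hprodlt, hprod]
    have h2arc : Real.arctan c + Real.arctan c =
        Real.arctan ((c + c) / (1 - c * c)) := Real.arctan_add hcc
    have hnum : c + c ≤ c * (b / a) + c * (a / b) := by
      have hr : 2 ≤ b / a + a / b := by
        rw [div_add_div _ _ (ne_of_gt ha) (ne_of_gt hb), le_div_iff₀ (by positivity)]
        nlinarith [sq_nonneg (a - b)]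
      nlinarith
    have hden : 0 < 1 - c * c := by linarith
    have hmono : Real.arctan ((c + c) / (1 - c * c)) ≤
        Real.arctan ((c * (b / a) + c * (a / b)) / (1 - c * c)) :=
      Real.arctan_strictMono.monotone ((div_le_div_iff_of_pos_right hden).mpr hnum)
    have hkey : δ ≤ A + B := by
      have hhalf := half_le_arctan h0 h1
      calc δ = δ / 2 + δ / 2 := by ring
        _ ≤ Real.arctan c + Real.arctan c := add_le_add hhalf hhalf
        _ = Real.arctan ((c + c) / (1 - c * c)) := h2arc
        _ ≤ Real.arctan ((c * (b / a) + c * (a / b)) / (1 - c * c)) := hmono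
        _ = A + B := hsum.symm
    refine ⟨A, hA0, hcase.le, ?_, ?_⟩
    · rw [hA, Real.tan_arctan]
      have : c * (b / a) * a = c * b := by field_simp
      rw [this]
    · have hδA1 : δ - A < π / 2 := by linarith
      have hδA0 : -(π / 2) < δ - A := by linarith
      have htan : Real.tan (δ - A) ≤ Real.tan B :=
        Real.strictMonoOn_tan.monotoneOn ⟨hδA0, hδA1⟩ hBmem (by linarith)
      rw [hB, Real.tan_arctan] at htan
      have : c * (a / b) * b = c * a := by field_simp
      nlinarith

/-- Part I: the case `π/2 ≤ γ < π`. -/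
lemma partI {f : X → ℝ × ℝ} (hf : ∀ x, 0 < (f x).1 ∧ 0 < (f x).2)
    (hclosed : IsClosed (Yset f)) {γ : ℝ} (hγ1 : π / 2 ≤ γ) (hγ2 : γ < π) (x : X) :
    ∃ x', GammaSupported γ f x' ∧ (f x').1 ≤ 2 * γ / π * (f x).1 ∧
      (f x').2 ≤ 2 * γ / π * (f x).2 := by
  have hπ := Real.pi_pos
  set δ : ℝ := γ - π / 2 with hδdef
  have hδ0 : 0 ≤ δ := by rw [hδdef]; linarith
  have hδ1 : δ < π / 2 := by rw [hδdef]; linarith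
  obtain ⟨φ, hφ0, hφδ, hb1, hb2⟩ := exists_phi hδ0 hδ1 (hf x).1 (hf x).2
  set c : ℝ := 2 * δ / π with hc
  have hαc : 2 * γ / π = 1 + c := by rw [hc, hδdef]; field_simp; ring
  set φ' : ℝ := δ - φ with hφ'def
  have hφ'0 : 0 ≤ φ' := by rw [hφ'def]; linarith
  have hφ'δ : φ' ≤ δ := by rw [hφ'def]; linarith
  have hγφ' : γ - π / 2 - φ = φ' := by rw [hφ'def, hδdef]
  clear_value δ c φ'
  have he1 : 0 < Real.cos φ' := Real.cos_pos_of_mem_Ioo ⟨by linarith, by linarith⟩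
  have he2 : 0 < Real.cos φ := Real.cos_pos_of_mem_Ioo ⟨by linarith, by linarith⟩
  have hs1 : 0 ≤ Real.sin φ' := Real.sin_nonneg_of_nonneg_of_le_pi hφ'0 (by linarith)
  have hs2 : 0 ≤ Real.sin φ := Real.sin_nonneg_of_nonneg_of_le_pi hφ0 (by linarith)
  have hdet : 0 < Real.cos φ' * Real.cos φ - Real.sin φ' * Real.sin φ := by
    have hadd : Real.cos (φ' + φ) =
        Real.cos φ' * Real.cos φ - Real.sin φ' * Real.sin φ := Real.cos_add φ' φ
    have hφφ : φ' + φ = δ := by rw [hφ'def]; ring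
    rw [hφφ] at hadd
    rw [← hadd]
    exact Real.cos_pos_of_mem_Ioo ⟨by linarith, hδ1⟩
  obtain ⟨xs, hT1, hT2, hstrict⟩ := partI_engine hf hclosed he1 he2 hs1 hs2 hdet x
  refine ⟨xs, ⟨φ, ?_, ?_⟩, ?_, ?_⟩
  · constructor
    · exact ⟨hφ0, by rw [← hδdef]; exact hφδ⟩
    · intro hmem
      simp only [Set.mem_insert_iff, Set.mem_singleton_iff] at hmem
      rcases hmem with h | h
      · have : γ - π < 0 := by linarith
        linarith [h ▸ hφ0]
      · linarith [h ▸ (lt_of_le_of_lt hφδ hδ1)]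
  · rintro ⟨x', hne, hle⟩
    obtain ⟨hc1, hc2⟩ := hle
    simp only [Tmap, hγφ'] at hc1 hc2
    have hd1 : (f xs - f x').1 = (f xs).1 - (f x').1 := rfl
    have hd2 : (f xs - f x').2 = (f xs).2 - (f x').2 := rfl
    rw [hd1, hd2] at hc1 hc2
    have hle1 : Real.cos φ' * (f x').1 + Real.sin φ' * (f x').2 ≤
        Real.cos φ' * (f xs).1 + Real.sin φ' * (f xs).2 := by nlinarith
    have hle2 : Real.sin φ * (f x').1 + Real.cos φ * (f x').2 ≤
        Real.sin φ * (f xs).1 + Real.cos φ * (f xs).2 := by nlinarith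
    exact hne (hstrict x' hle1 hle2)
  · -- first coordinate bound, uses tan φ' * b ≤ c * a
    have htan : Real.sin φ' * (f x).2 ≤ Real.cos φ' * (c * (f x).1) := by
      have h4 := mul_le_mul_of_nonneg_left hb2 he1.le
      have hts : Real.cos φ' * Real.tan φ' = Real.sin φ' := by
        rw [Real.tan_eq_sin_div_cos]; field_simp
      calc Real.sin φ' * (f x).2 = Real.cos φ' * Real.tan φ' * (f x).2 := by rw [hts]
        _ = Real.cos φ' * (Real.tan φ' * (f x).2) := by ring
        _ ≤ Real.cos φ' * (c * (f x).1) := h4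
    have hxs2 : 0 < (f xs).2 := (hf xs).2
    have hkey : Real.cos φ' * (f xs).1 ≤ Real.cos φ' * ((1 + c) * (f x).1) := by
      linarith [mul_nonneg hs1 hxs2.le]
    have := (mul_le_mul_iff_right₀ he1).mp hkey
    rw [hαc]; exact this
  · have htan : Real.sin φ * (f x).1 ≤ Real.cos φ * (c * (f x).2) := by
      have h4 := mul_le_mul_of_nonneg_left hb1 he2.le
      have hts : Real.cos φ * Real.tan φ = Real.sin φ := by
        rw [Real.tan_eq_sin_div_cos]; field_simp
      calc Real.sin φ * (f x).1 = Real.cos φ * Real.tan φ * (f x).1 := by rw [hts]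
        _ = Real.cos φ * (Real.tan φ * (f x).1) := by ring
        _ ≤ Real.cos φ * (c * (f x).2) := h4
    have hxs1 : 0 < (f xs).1 := (hf xs).1
    have hkey : Real.cos φ * (f xs).2 ≤ Real.cos φ * ((1 + c) * (f x).2) := by
      linarith [mul_nonneg hs2 hxs1.le]
    have := (mul_le_mul_iff_right₀ he2).mp hkey
    rw [hαc]; exact this

/-! #### Part II : the case `γ = π` -/

/-- The weighted-sum scalarization used in the case `γ = π`. -/
def ell (t : ℝ) (y : ℝ × ℝ) : ℝ := t * y.1 + y.2

/-- `t` is a "good" parameter: the scalarized problem has a unique-value optimum. -/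
def GoodT (f : X → ℝ × ℝ) (t : ℝ) : Prop :=
  ∃ xm : X, (∀ x', ell t (f xm) ≤ ell t (f x')) ∧
    ∀ x', f x' ≠ f xm → ell t (f xm) < ell t (f x')

lemma partII_min [Nonempty X] {f : X → ℝ × ℝ} (hf : ∀ x, 0 < (f x).1 ∧ 0 < (f x).2)
    (hclosed : IsClosed (Yset f)) {t : ℝ} (ht : 0 < t) :
    ∃ xm : X, ∀ x', ell t (f xm) ≤ ell t (f x') := by
  classical
  obtain ⟨x⟩ := ‹Nonempty X›
  set C : Set (ℝ × ℝ) := {y | t * y.1 + y.2 ≤ t * (f x).1 + (f x).2} with hCdef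
  have hC : IsClosed C :=
    isClosed_le (by fun_prop) continuous_const
  set M : ℝ := max ((t * (f x).1 + (f x).2) / t) (t * (f x).1 + (f x).2) with hM
  have hbd : ∀ y ∈ Yset f ∩ C, y.1 ≤ M ∧ y.2 ≤ M := by
    intro y hy
    have hpos := Yset_pos hf hy.1
    have hyC : t * y.1 + y.2 ≤ t * (f x).1 + (f x).2 := hy.2
    constructor
    · refine le_trans ?_ (le_max_left _ _)
      rw [le_div_iff₀ ht]
      nlinarith
    · refine le_trans ?_ (le_max_right _ _)
      nlinarith
  have hfxC : f x ∈ C := by rw [hCdef]; exact Set.mem_setOf_eq ▸ le_refl _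
  have hne : (Yset f ∩ C).Nonempty := ⟨f x, mem_Yset_self f x, hfxC⟩
  obtain ⟨y0, hy0, hmin⟩ := exists_min_on hf hclosed hC M hbd hne
    (g := fun y => t * y.1 + y.2) (by fun_prop)
  obtain ⟨xm, hxm1, hxm2⟩ := Yset_decompose hy0.1
  have hxmy0 : ell t (f xm) ≤ t * y0.1 + y0.2 := by
    unfold ell; nlinarith
  refine ⟨xm, fun x' => ?_⟩
  rcases le_or_gt (ell t (f x')) (ell t (f x)) with hcase | hcase
  · have hx'C : f x' ∈ Yset f ∩ C := ⟨mem_Yset_self f x', hcase⟩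
    exact le_trans hxmy0 (hmin (f x') hx'C)
  · have hxC : f x ∈ Yset f ∩ C := ⟨mem_Yset_self f x, hfxC⟩
    exact le_trans (le_trans hxmy0 (hmin (f x) hxC)) hcase.le

lemma partII_good_dense [Nonempty X] {f : X → ℝ × ℝ}
    (hf : ∀ x, 0 < (f x).1 ∧ 0 < (f x).2) (hclosed : IsClosed (Yset f))
    {lo hi : ℝ} (hlo : 0 < lo) (hlohi : lo < hi) :
    ∃ t, lo < t ∧ t < hi ∧ GoodT f t := by
  classical
  by_contra hcon
  push_neg at hcon
  have key : ∀ t : ℝ, t ∈ Set.Ioo lo hi → ∃ r : ℚ, ∃ u v : X,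
      (∀ x', ell t (f u) ≤ ell t (f x')) ∧ (∀ x', ell t (f v) ≤ ell t (f x')) ∧
      (f u).1 < (r : ℝ) ∧ (r : ℝ) < (f v).1 := by
    intro t ht
    have ht0 : 0 < t := lt_trans hlo ht.1
    obtain ⟨xm, hxm⟩ := partII_min hf hclosed ht0
    have hng : ¬ GoodT f t := hcon t ht.1 ht.2
    rw [GoodT] at hng
    push_neg at hng
    obtain ⟨x', hne, hle⟩ := hng xm hxm
    have hmin' : ∀ x'', ell t (f x') ≤ ell t (f x'') := fun x'' =>
      le_trans hle (hxm x'')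
    have heq : ell t (f x') = ell t (f xm) := le_antisymm hle (hxm x')
    have h1ne : (f x').1 ≠ (f xm).1 := by
      intro h
      apply hne
      apply Prod.ext h
      unfold ell at heq
      rw [h] at heq
      linarith
    rcases lt_or_gt_of_ne h1ne with hlt | hgt
    · obtain ⟨r, hr1, hr2⟩ := exists_rat_btwn hlt
      exact ⟨r, x', xm, hmin', hxm, hr1, hr2⟩
    · obtain ⟨r, hr1, hr2⟩ := exists_rat_btwn hgt
      exact ⟨r, xm, x', hxm, hmin', hr1, hr2⟩
  choose r u v hu hv hru hrv using key
  set F : ℝ → ℕ := fun t =>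
    if h : t ∈ Set.Ioo lo hi then Encodable.encode (r t h) else 0 with hF
  have hexch : ∀ (t t' : ℝ) (h : t ∈ Set.Ioo lo hi) (h' : t' ∈ Set.Ioo lo hi),
      t < t' → (f (v t' h')).1 ≤ (f (u t h)).1 := by
    intro t t' h h' htt'
    have h1 : ell t (f (u t h)) ≤ ell t (f (v t' h')) := hu t h _
    have h2 : ell t' (f (v t' h')) ≤ ell t' (f (u t h)) := hv t' h' _
    unfold ell at h1 h2
    nlinarith
  have hinj : Set.InjOn F (Set.Ioo lo hi) := by
    intro t ht t' ht' hFt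
    by_contra hne
    rcases lt_or_gt_of_ne hne with hlt | hgt
    · have h1 : (f (v t' ht')).1 ≤ (f (u t ht)).1 := hexch t t' ht ht' hlt
      have h2 : ((r t ht : ℚ) : ℝ) < (f (v t ht)).1 := hrv t ht
      have h3 : (f (u t ht)).1 < ((r t ht : ℚ) : ℝ) := hru t ht
      have h4 : ((r t' ht' : ℚ) : ℝ) < (f (v t' ht')).1 := hrv t' ht'
      have hFt' : r t ht = r t' ht' := by
        rw [hF] at hFt
        simp only [dif_pos ht, dif_pos ht'] at hFt
        exact Encodable.encode_injective hFt
      rw [← hFt'] at h4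
      linarith
    · have h1 : (f (v t ht)).1 ≤ (f (u t' ht')).1 := hexch t' t ht' ht hgt
      have h2 : ((r t' ht' : ℚ) : ℝ) < (f (v t' ht')).1 := hrv t' ht'
      have h3 : (f (u t' ht')).1 < ((r t' ht' : ℚ) : ℝ) := hru t' ht'
      have h4 : ((r t ht : ℚ) : ℝ) < (f (v t ht)).1 := hrv t ht
      have hFt' : r t ht = r t' ht' := by
        rw [hF] at hFt
        simp only [dif_pos ht, dif_pos ht'] at hFt
        exact Encodable.encode_injective hFt
      rw [hFt'] at h4
      linarith
  have hcnt : (Set.Ioo lo hi).Countable :=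
    Set.countable_iff_exists_injOn.mpr ⟨F, hinj⟩
  have hmk := Cardinal.mk_Ioo_real hlohi
  have : (Cardinal.mk (Set.Ioo lo hi)) ≤ Cardinal.aleph0 :=
    Cardinal.mk_le_aleph0_iff.mpr (Set.countable_coe_iff.mpr hcnt)
  rw [hmk] at this
  exact absurd this (not_le.mpr Cardinal.aleph0_lt_continuum)

lemma optimal_of_strict {f : X → ℝ × ℝ} {t : ℝ} (ht : 0 < t) {xm : X}
    (h : ∀ x', f x' ≠ f xm → ell t (f xm) < ell t (f x')) :
    OptimalWrt π (Real.arctan t) f xm := by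
  rintro ⟨x', hne, hle⟩
  have h2 := hle.2
  simp only [Tmap] at h2
  rw [Real.sin_arctan, Real.cos_arctan] at h2
  have hd1 : (f xm - f x').1 = (f xm).1 - (f x').1 := rfl
  have hd2 : (f xm - f x').2 = (f xm).2 - (f x').2 := rfl
  rw [hd1, hd2] at h2
  have hs : 0 < Real.sqrt (1 + t ^ 2) := Real.sqrt_pos.mpr (by positivity)
  have h3 : 0 ≤ t * ((f xm).1 - (f x').1) + ((f xm).2 - (f x').2) := by
    have hfac : t / Real.sqrt (1 + t ^ 2) * ((f xm).1 - (f x').1) +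
        1 / Real.sqrt (1 + t ^ 2) * ((f xm).2 - (f x').2) =
        (t * ((f xm).1 - (f x').1) + ((f xm).2 - (f x').2)) / Real.sqrt (1 + t ^ 2) := by
      field_simp
    rw [hfac] at h2
    rcases div_nonneg_iff.mp h2 with ⟨hE, _⟩ | ⟨_, hs'⟩
    · exact hE
    · linarith
  have := h x' hne
  unfold ell at this
  linarith

end AuxStmt17

/-- the set of `γ`-supported solutions is a `(2γ/π)`-approximation. -/
theorem stmt_17 (X : Type) (hX : Nonempty X) (f : X → ℝ × ℝ)
    (hf : ∀ x, 0 < (f x).1 ∧ 0 < (f x).2)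
    (hclosed : IsClosed (Set.range f + {y : ℝ × ℝ | 0 ≤ y.1 ∧ 0 ≤ y.2}))
    (γ : ℝ) (hγ : γ ∈ Set.Icc (Real.pi/2) Real.pi) :
    IsApprox (2 * γ / Real.pi) f {x : X | GammaSupported γ f x} := by
  classical
  have hYclosed : IsClosed (Yset f) := hclosed
  intro x
  rcases lt_or_eq_of_le hγ.2 with hlt | heqγ
  · obtain ⟨x', hsup, h1, h2⟩ := partI hf hYclosed hγ.1 hlt x
    exact ⟨x', hsup, h1, h2⟩
  · subst heqγ
    have hπ := Real.pi_pos
    have ha : 0 < (f x).1 := (hf x).1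
    have hb : 0 < (f x).2 := (hf x).2
    set t0 : ℝ := (f x).2 / (f x).1 with ht0def
    have ht0 : 0 < t0 := by positivity
    have hseq : ∀ n : ℕ, ∃ t, t0 < t ∧ t < t0 + 1 / ((n : ℝ) + 1) ∧ GoodT f t := by
      intro n
      apply partII_good_dense hf hYclosed ht0
      have : (0 : ℝ) < 1 / ((n : ℝ) + 1) := by positivity
      linarith
    choose t ht1 ht2 hgood using hseq
    choose xm hxmmin hxmstrict using hgood
    have htpos : ∀ n, 0 < t n := fun n => lt_trans ht0 (ht1 n)
    set C : Set (ℝ × ℝ) :=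
      {y | t0 * y.1 + y.2 ≤ (t0 + 1) * (f x).1 + (f x).2} with hCdef
    have hC : IsClosed C := isClosed_le (by fun_prop) continuous_const
    have htle : ∀ n : ℕ, t n ≤ t0 + 1 / ((n : ℝ) + 1) := fun n => (ht2 n).le
    have hvC : ∀ n, f (xm n) ∈ Yset f ∩ C := by
      intro n
      refine ⟨mem_Yset_self f (xm n), ?_⟩
      have h1 : ell (t n) (f (xm n)) ≤ ell (t n) (f x) := hxmmin n x
      unfold ell at h1
      have hpos1 : 0 < (f (xm n)).1 := (hf (xm n)).1
      have hfrac : 1 / ((n : ℝ) + 1) ≤ 1 := by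
        rw [div_le_one (by positivity)]
        linarith [Nat.cast_nonneg (α := ℝ) n]
      have htn1 : t n ≤ t0 + 1 := by linarith [htle n]
      have e1 : t0 * (f (xm n)).1 ≤ t n * (f (xm n)).1 :=
        mul_le_mul_of_nonneg_right (ht1 n).le hpos1.le
      have e2 : t n * (f x).1 ≤ (t0 + 1) * (f x).1 :=
        mul_le_mul_of_nonneg_right htn1 ha.le
      show t0 * (f (xm n)).1 + (f (xm n)).2 ≤ (t0 + 1) * (f x).1 + (f x).2
      linarith
    set M : ℝ := max (((t0 + 1) * (f x).1 + (f x).2) / t0)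
      ((t0 + 1) * (f x).1 + (f x).2) with hM
    have hbd : ∀ y ∈ Yset f ∩ C, y.1 ≤ M ∧ y.2 ≤ M := by
      intro y hy
      have hpos := Yset_pos hf hy.1
      have hyC : t0 * y.1 + y.2 ≤ (t0 + 1) * (f x).1 + (f x).2 := hy.2
      constructor
      · refine le_trans ?_ (le_max_left _ _)
        rw [le_div_iff₀ ht0]
        nlinarith
      · refine le_trans ?_ (le_max_right _ _)
        nlinarith
    have hcomp := compact_slice hf hYclosed hC M hbd
    obtain ⟨z, hz, ψ, hψ, hzlim⟩ :=
      hcomp.tendsto_subseq (x := fun n => f (xm n)) hvC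
    have hzpos := Yset_pos hf hz.1
    have ht0a : t0 * (f x).1 = (f x).2 := by rw [ht0def]; field_simp
    have hlim : t0 * z.1 + z.2 ≤ t0 * (f x).1 + (f x).2 := by
      have hcont : Continuous fun y : ℝ × ℝ => t0 * y.1 + y.2 := by fun_prop
      have htend : Filter.Tendsto
          (fun n => t0 * (f (xm (ψ n))).1 + (f (xm (ψ n))).2)
          Filter.atTop (nhds (t0 * z.1 + z.2)) := (hcont.tendsto z).comp hzlim
      have hb' : ∀ n : ℕ, t0 * (f (xm (ψ n))).1 + (f (xm (ψ n))).2 ≤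
          (t0 + 1 / ((n : ℝ) + 1)) * (f x).1 + (f x).2 := by
        intro n
        have h1 : ell (t (ψ n)) (f (xm (ψ n))) ≤ ell (t (ψ n)) (f x) :=
          hxmmin (ψ n) x
        unfold ell at h1
        have hpos1 : 0 < (f (xm (ψ n))).1 := (hf _).1
        have e1 : t0 * (f (xm (ψ n))).1 ≤ t (ψ n) * (f (xm (ψ n))).1 :=
          mul_le_mul_of_nonneg_right (ht1 _).le hpos1.le
        have hψn : t (ψ n) ≤ t0 + 1 / ((n : ℝ) + 1) := by
          have h3 := htle (ψ n)
          have hmono : 1 / ((ψ n : ℝ) + 1) ≤ 1 / ((n : ℝ) + 1) := by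
            apply one_div_le_one_div_of_le (by positivity)
            have h4 : (n : ℝ) ≤ (ψ n : ℝ) := Nat.cast_le.mpr hψ.le_apply
            linarith
          linarith
        have e2 : t (ψ n) * (f x).1 ≤ (t0 + 1 / ((n : ℝ) + 1)) * (f x).1 :=
          mul_le_mul_of_nonneg_right hψn ha.le
        linarith
      have htend2 : Filter.Tendsto
          (fun n : ℕ => (t0 + 1 / ((n : ℝ) + 1)) * (f x).1 + (f x).2)
          Filter.atTop (nhds (t0 * (f x).1 + (f x).2)) := by
        have h0 : Filter.Tendsto (fun n : ℕ => 1 / ((n : ℝ) + 1))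
            Filter.atTop (nhds 0) := tendsto_one_div_add_atTop_nhds_zero_nat
        have h5 := ((h0.const_add t0).mul_const ((f x).1)).add_const ((f x).2)
        simpa using h5
      exact le_of_tendsto_of_tendsto' htend htend2 hb'
    have hz1 : z.1 < 2 * (f x).1 := by
      have h6 : t0 * z.1 < t0 * (2 * (f x).1) := by
        linarith [hzpos.2]
      exact (mul_lt_mul_iff_right₀ ht0).mp h6
    have hz2 : z.2 < 2 * (f x).2 := by
      linarith [mul_pos ht0 hzpos.1]
    have hc1 : Filter.Tendsto (fun n => (f (xm (ψ n))).1) Filter.atTop (nhds z.1) :=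
      (continuous_fst.tendsto z).comp hzlim
    have hc2 : Filter.Tendsto (fun n => (f (xm (ψ n))).2) Filter.atTop (nhds z.2) :=
      (continuous_snd.tendsto z).comp hzlim
    have he1 : ∀ᶠ n in Filter.atTop, (f (xm (ψ n))).1 < 2 * (f x).1 :=
      hc1.eventually_lt_const hz1
    have he2 : ∀ᶠ n in Filter.atTop, (f (xm (ψ n))).2 < 2 * (f x).2 :=
      hc2.eventually_lt_const hz2
    obtain ⟨n, hn1, hn2⟩ := (he1.and he2).exists
    have harcpos : 0 < Real.arctan (t (ψ n)) := by
      rw [← Real.arctan_zero]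
      exact Real.arctan_strictMono (htpos (ψ n))
    have harclt : Real.arctan (t (ψ n)) < π / 2 := Real.arctan_lt_pi_div_two _
    refine ⟨xm (ψ n), ?_, ?_, ?_⟩
    · refine ⟨Real.arctan (t (ψ n)), ⟨?_, ?_⟩,
        optimal_of_strict (htpos (ψ n)) (hxmstrict (ψ n))⟩
      · rw [Set.mem_Icc]
        constructor
        · exact harcpos.le
        · linarith
      · intro hmem
        simp only [Set.mem_insert_iff, Set.mem_singleton_iff] at hmem
        rcases hmem with h | h
        · linarith [h.symm.le]
        · linarith [h.le]
    · have h2 : 2 * π / π = 2 := by field_simp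
      rw [h2]; exact hn1.le
    · have h2 : 2 * π / π = 2 := by field_simp
      rw [h2]; exact hn2.le
end
end
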